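/- arXiv:1901.02408 — 10 statements merged into one kernel-verified Lean document; each statement's English description precedes it below -/
import Mathlib

section
/- The function f_3(z) = z + z^3/4 satisfies |(z/f_3(z))^2 · f_3'(z) - 1| < 1 for all z in the open unit disc; i.e., f_3 belongs to the class U. -/
open Metric

theorem stmt_1 :
    ∀ z ∈ ball (0 : ℂ) 1, z ≠ 0 →
      ‖(z / (z + z ^ 3 / 4)) ^ 2 * deriv (fun w : ℂ => w + w ^ 3 / 4) z - 1‖ < 1 := by
  intro z hz hz0
  rw [mem_ball, dist_zero_right] at hz
  have hd : deriv (fun w : ℂ => w + w ^ 3 / 4) z = 1 + 3 * z ^ 2 / 4 := by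
    have h1 := (hasDerivAt_pow 3 z).div_const 4
    have h2 := (hasDerivAt_id z).add h1
    have h3 : HasDerivAt (fun w : ℂ => w + w ^ 3 / 4) (1 + 3 * z ^ 2 / 4) z := by
      have h2' : HasDerivAt (fun w : ℂ => w + w ^ 3 / 4) (1 + ↑3 * z ^ (3 - 1) / 4) z := h2
      convert h2' using 1
    exact h3.deriv
  have h1 : ‖z ^ 2‖ < 1 := by
    rw [norm_pow]
    nlinarith [norm_nonneg z]
  have h4 : (4 : ℂ) + z ^ 2 ≠ 0 := by
    intro h
    have hz2 : z ^ 2 = -4 := by linear_combination h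
    have : ‖z ^ 2‖ = 4 := by rw [hz2]; simp
    linarith
  have hden : z + z ^ 3 / 4 ≠ 0 := by
    intro h
    have hm : z * (4 + z ^ 2) = 0 := by linear_combination 4 * h
    rcases mul_eq_zero.mp hm with h' | h'
    · exact hz0 h'
    · exact h4 h'
  have heq : (z / (z + z ^ 3 / 4)) ^ 2 * deriv (fun w : ℂ => w + w ^ 3 / 4) z - 1
      = z ^ 2 * (4 - z ^ 2) / (4 + z ^ 2) ^ 2 := by
    have hq : z / (z + z ^ 3 / 4) = 4 / (4 + z ^ 2) := by
      rw [div_eq_div_iff hden h4]; ring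
    rw [hd, hq, div_pow, div_mul_eq_mul_div, div_sub_one (pow_ne_zero 2 h4)]
    congr 1
    ring
  rw [heq, norm_div, norm_mul, norm_pow, norm_pow]
  have h2 : ‖(4 : ℂ) - z ^ 2‖ < 5 := by
    calc ‖(4 : ℂ) - z ^ 2‖ ≤ ‖(4 : ℂ)‖ + ‖z ^ 2‖ := norm_sub_le _ _
    _ < 5 := by
        have : ‖(4 : ℂ)‖ = 4 := by simp
        linarith
  have h3 : (3 : ℝ) < ‖(4 + z ^ 2 : ℂ)‖ := by
    have h5 : ‖(4 : ℂ)‖ ≤ ‖(4 + z ^ 2 : ℂ)‖ + ‖z ^ 2‖ := by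
      calc ‖(4 : ℂ)‖ = ‖(4 + z ^ 2 : ℂ) - z ^ 2‖ := by ring_nf
      _ ≤ _ := norm_sub_le _ _
    have : ‖(4 : ℂ)‖ = 4 := by simp
    linarith
  rw [div_lt_one (by nlinarith)]
  nlinarith [norm_nonneg z, norm_nonneg ((4:ℂ) - z^2), norm_nonneg ((4:ℂ)+z^2)]
end

section
/- For each integer n ≥ 2, the function f_n(z) = z + z^n/(2(n-1)) satisfies Re(1 + z f_n''(z)/f_n'(z)) > 0 for all |z| < r_0 where r_0 = (2(n-1)/n^2)^{1/(n-1)}; i.e., f_n is convex in the disc of radius r_0. -/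
open Metric

theorem stmt_3 (n : ℕ) (hn : 2 ≤ n) :
    ∀ z : ℂ, ‖z‖ < (2 * ((n : ℝ) - 1) / n ^ 2) ^ ((1 : ℝ) / ((n : ℝ) - 1)) →
      0 < (1 + z * deriv (deriv (fun w : ℂ => w + w ^ n / (2 * ((n : ℂ) - 1)))) z /
            deriv (fun w : ℂ => w + w ^ n / (2 * ((n : ℂ) - 1))) z).re := by
  intro z hz
  have hn1 : (1:ℕ) ≤ n := by omega
  have hnR : (2:ℝ) ≤ (n:ℝ) := by exact_mod_cast hn
  have h1R : ((n:ℝ)) - 1 ≠ 0 := by linarith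
  have h1C : ((n:ℂ)) - 1 ≠ 0 := by
    have : (n:ℂ) ≠ 1 := by exact_mod_cast (show n ≠ 1 by omega)
    exact sub_ne_zero.mpr this
  have hdC : (2 * ((n:ℂ) - 1)) ≠ 0 := by simp [h1C]
  -- first derivative
  have hderiv1 : deriv (fun w : ℂ => w + w ^ n / (2 * ((n : ℂ) - 1)))
      = fun x : ℂ => 1 + ((n:ℂ) * x ^ (n - 1)) / (2 * ((n:ℂ) - 1)) := by
    funext x
    exact ((hasDerivAt_id x).add ((hasDerivAt_pow n x).div_const _)).deriv
  -- second derivative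
  have hderiv2 : deriv (deriv (fun w : ℂ => w + w ^ n / (2 * ((n : ℂ) - 1)))) z
      = ((n:ℂ) * (((n:ℂ) - 1) * z ^ (n - 2))) / (2 * ((n:ℂ) - 1)) := by
    rw [hderiv1]
    have h : HasDerivAt (fun x : ℂ => 1 + ((n:ℂ) * x ^ (n - 1)) / (2 * ((n:ℂ) - 1)))
        (((n:ℂ) * ((↑(n-1) : ℂ) * z ^ (n - 1 - 1))) / (2 * ((n:ℂ) - 1))) z := by
      simpa using
        (((hasDerivAt_pow (n-1) z).const_mul (n:ℂ)).div_const (2 * ((n:ℂ) - 1))).const_add (1:ℂ)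
    rw [h.deriv]
    have e1 : ((↑(n-1) : ℂ)) = (n:ℂ) - 1 := by
      push_cast [Nat.cast_sub hn1]; ring
    have e2 : n - 1 - 1 = n - 2 := by omega
    rw [e1, e2]
  rw [hderiv2, hderiv1]
  simp only
  set a : ℂ := ((n:ℂ) * z ^ (n - 1)) / (2 * ((n:ℂ) - 1)) with ha
  -- norm of a
  have hdR : (0:ℝ) < 2 * ((n:ℝ) - 1) := by linarith
  have hnormd : ‖(2 * ((n:ℂ) - 1))‖ = 2 * ((n:ℝ) - 1) := by
    have e : (2 * ((n:ℂ) - 1)) = (((2*(n-1) : ℕ)):ℂ) := by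
      push_cast [Nat.cast_sub hn1]; ring
    rw [e, Complex.norm_natCast, Nat.cast_mul, Nat.cast_sub hn1]
    push_cast; ring
  have hb : (0:ℝ) < 2 * ((n:ℝ) - 1) / (n:ℝ) ^ 2 := by positivity
  have hzpow : ‖z‖ ^ (n - 1) < 2 * ((n:ℝ) - 1) / (n:ℝ) ^ 2 := by
    have hr0 : ((2 * ((n : ℝ) - 1) / n ^ 2) ^ ((1 : ℝ) / ((n : ℝ) - 1))) ^ (n - 1)
        = 2 * ((n:ℝ) - 1) / (n:ℝ) ^ 2 := by
      rw [← Real.rpow_natCast ((2 * ((n : ℝ) - 1) / n ^ 2) ^ ((1 : ℝ) / ((n : ℝ) - 1))) (n-1),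
        ← Real.rpow_mul hb.le]
      have e : (1 : ℝ) / ((n : ℝ) - 1) * ((n-1 : ℕ) : ℝ) = 1 := by
        push_cast [Nat.cast_sub hn1]
        rw [one_div_mul_cancel h1R]
      rw [e, Real.rpow_one]
    calc ‖z‖ ^ (n - 1) < ((2 * ((n : ℝ) - 1) / n ^ 2) ^ ((1 : ℝ) / ((n : ℝ) - 1))) ^ (n - 1) :=
          pow_lt_pow_left₀ hz (norm_nonneg z) (by omega)
      _ = _ := hr0
  have hnorma : ‖a‖ < 1 / (n:ℝ) := by
    rw [ha, norm_div, norm_mul, hnormd, norm_pow, Complex.norm_natCast]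
    rw [div_lt_div_iff₀ hdR (by positivity)]
    have h2 : ‖z‖ ^ (n - 1) * (n:ℝ) ^ 2 < 2 * ((n:ℝ) - 1) :=
      (lt_div_iff₀ (by positivity)).mp hzpow
    nlinarith [h2]
  have hta : ‖a‖ < 1 := by
    have h12 : (1:ℝ)/(n:ℝ) ≤ 1/2 := by
      apply one_div_le_one_div_of_le <;> linarith
    linarith
  have hva : (1 : ℂ) + a ≠ 0 := by
    intro h
    have : a = -1 := by linear_combination h
    rw [this] at hta; simp at hta
  -- simplify the expression to (1 + n*a)/(1 + a)
  have hzz : z * z ^ (n - 2) = z ^ (n - 1) := by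
    rw [← pow_succ']
    congr 1
    omega
  have hnum : z * (((n:ℂ) * (((n:ℂ) - 1) * z ^ (n - 2))) / (2 * ((n:ℂ) - 1)))
      = ((n:ℂ) - 1) * a := by
    rw [ha, ← hzz]; ring
  have hkey : (1 : ℂ) + z * (((n:ℂ) * (((n:ℂ) - 1) * z ^ (n - 2))) / (2 * ((n:ℂ) - 1))) /
      (1 + a) = (1 + (n:ℂ) * a) / (1 + a) := by
    rw [hnum]
    field_simp
    ring
  rw [hkey]
  -- real part computation
  have hre : ((1 + (n:ℂ) * a) / (1 + a)).re
      = ((1 + (n:ℝ) * a.re) * (1 + a.re) + ((n:ℝ) * a.im) * a.im) / Complex.normSq (1 + a) := by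
    rw [Complex.div_re]
    simp [Complex.normSq]
    ring
  rw [hre]
  apply div_pos
  · have h1 : -‖a‖ ≤ a.re := by
      have h := Complex.abs_re_le_norm a
      have h' := neg_abs_le a.re
      linarith
    have h2 : a.re ^ 2 + a.im ^ 2 = ‖a‖ ^ 2 := by
      rw [← Complex.normSq_eq_norm_sq, Complex.normSq_apply]; ring
    have hnt : (n:ℝ) * ‖a‖ < 1 := by
      have hn0 : (0:ℝ) < (n:ℝ) := by linarith
      rw [lt_div_iff₀ hn0] at hnorma
      linarith
    nlinarith [norm_nonneg a, sq_nonneg (a.re + ‖a‖), hnR]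
  · exact Complex.normSq_pos.mpr hva
end

section
/- Every function f in the class Ω is starlike: if f is analytic on the unit disc with f(0) = 0, f'(0) = 1, and |z f'(z) - f(z)| < 1/2 for all z in the unit disc, then Re(z f'(z)/f(z)) > 0 for all z in the unit disc with z ≠ 0 (and f(z) ≠ 0 for z ≠ 0). -/
open Metric Set Filter
open scoped Topology

theorem stmt_4 (f : ℂ → ℂ) (hf : AnalyticOnNhd ℂ f (ball 0 1))
    (hf0 : f 0 = 0) (hf1 : deriv f 0 = 1)
    (hΩ : ∀ z ∈ ball (0 : ℂ) 1, ‖z * deriv f z - f z‖ < 1 / 2) :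
    ∀ z ∈ ball (0 : ℂ) 1, z ≠ 0 → f z ≠ 0 ∧ 0 < (z * deriv f z / f z).re := by
  have h01 : (0 : ℂ) ∈ ball (0 : ℂ) 1 := by simp
  set φ : ℂ → ℂ := fun z => z * deriv f z - f z with hφdef
  have hfd : AnalyticOnNhd ℂ (deriv f) (ball 0 1) := hf.deriv
  have hφa : AnalyticOnNhd ℂ φ (ball 0 1) := fun z hz =>
    ((analyticAt_id).mul (hfd z hz)).sub (hf z hz)
  have hφd : DifferentiableOn ℂ φ (ball 0 1) := hφa.differentiableOn
  have hφ0 : φ 0 = 0 := by simp [hφdef, hf0]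
  -- first Schwarz application
  have hmaps : MapsTo φ (ball 0 1) (ball (φ 0) (1 / 2)) := by
    intro z hz
    rw [hφ0, mem_ball, dist_zero_right]
    exact hΩ z hz
  have h1 : ∀ z ∈ ball (0 : ℂ) 1, ‖dslope φ 0 z‖ ≤ 1 / 2 := by
    intro z hz
    simpa using Complex.norm_dslope_le_div_of_mapsTo_ball hφd (hmaps.mono_right ball_subset_closedBall) hz
  set φ₁ : ℂ → ℂ := dslope φ 0 with hφ₁def
  have hφ₁d : DifferentiableOn ℂ φ₁ (ball 0 1) :=
    (Complex.differentiableOn_dslope (ball_mem_nhds _ one_pos)).mpr hφd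
  have hφ₁0 : φ₁ 0 = 0 := by
    rw [hφ₁def, dslope_same]
    have hd2 : DifferentiableAt ℂ (deriv f) 0 := (hfd 0 h01).differentiableAt
    have hd1 : DifferentiableAt ℂ f 0 := (hf 0 h01).differentiableAt
    have : deriv φ 0 = deriv (fun z => z * deriv f z) 0 - deriv f 0 := by
      rw [hφdef, deriv_fun_sub (f := fun z => z * deriv f z) (differentiableAt_fun_id.mul hd2) hd1]
    rw [this, deriv_fun_mul differentiableAt_fun_id hd2]
    simp
  -- second Schwarz application
  have h2 : ∀ z ∈ ball (0 : ℂ) 1, ‖dslope φ₁ 0 z‖ ≤ 1 / 2 := by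
    intro z hz
    refine le_of_forall_pos_le_add fun ε hε => ?_
    have hmaps₁ : MapsTo φ₁ (ball 0 1) (ball (φ₁ 0) (1 / 2 + ε)) := by
      intro w hw
      rw [hφ₁0, mem_ball, dist_zero_right]
      exact lt_of_le_of_lt (h1 w hw) (by linarith)
    simpa using Complex.norm_dslope_le_div_of_mapsTo_ball hφ₁d (hmaps₁.mono_right ball_subset_closedBall) hz
  -- key bound: ‖φ z‖ ≤ ‖z‖² / 2
  have hkey : ∀ z ∈ ball (0 : ℂ) 1, ‖φ z‖ ≤ ‖z‖ ^ 2 * (1 / 2) := by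
    intro z hz
    rcases eq_or_ne z 0 with rfl | hz0
    · simp [hφ0]
    · have e1 : φ₁ z = z⁻¹ * φ z := by
        rw [hφ₁def, dslope_of_ne _ hz0, slope_def_field, hφ0]
        field_simp
        ring
      have e2 : dslope φ₁ 0 z = z⁻¹ * φ₁ z := by
        rw [dslope_of_ne _ hz0, slope_def_field, hφ₁0]
        field_simp
        ring
      have := h2 z hz
      rw [e2, e1] at this
      have hzn : (0 : ℝ) < ‖z‖ := norm_pos_iff.mpr hz0
      rw [norm_mul, norm_mul, norm_inv, ← mul_assoc] at this
      calc ‖φ z‖ = ‖z‖ ^ 2 * (‖z‖⁻¹ * ‖z‖⁻¹ * ‖φ z‖) := by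
            rw [show ‖z‖ ^ 2 * (‖z‖⁻¹ * ‖z‖⁻¹ * ‖φ z‖)
                = (‖z‖ * ‖z‖⁻¹) * ((‖z‖ * ‖z‖⁻¹) * ‖φ z‖) by ring,
              mul_inv_cancel₀ hzn.ne']
            ring
        _ ≤ ‖z‖ ^ 2 * (1 / 2) := mul_le_mul_of_nonneg_left this (by positivity)
  -- g = dslope f 0 : g 0 = 1, f z = z * g z
  set g : ℂ → ℂ := dslope f 0 with hgdef
  have hgd : DifferentiableOn ℂ g (ball 0 1) :=
    (Complex.differentiableOn_dslope (ball_mem_nhds _ one_pos)).mpr hf.differentiableOn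
  have hga : AnalyticOnNhd ℂ g (ball 0 1) := hgd.analyticOnNhd isOpen_ball
  have hg0 : g 0 = 1 := by rw [hgdef, dslope_same, hf1]
  have hgz : ∀ z : ℂ, z ≠ 0 → g z = f z / z := by
    intro z hz0
    rw [hgdef, dslope_of_ne _ hz0, slope_def_field, hf0]
    simp
  -- bound on deriv g
  have hderiv_ne : ∀ w ∈ ball (0 : ℂ) 1, w ≠ 0 → ‖deriv g w‖ ≤ 1 / 2 := by
    intro w hw hw0
    have hev : g =ᶠ[𝓝 w] fun z => f z / z := by
      filter_upwards [eventually_ne_nhds hw0] with z hz using hgz z hz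
    have hfa : DifferentiableAt ℂ f w := (hf w hw).differentiableAt
    have hdg : deriv g w = (deriv f w * w - f w * 1) / w ^ 2 := by
      rw [hev.deriv_eq, deriv_fun_div hfa differentiableAt_fun_id hw0]
      simp
    have hwn : (0 : ℝ) < ‖w‖ := norm_pos_iff.mpr hw0
    rw [hdg]
    have : deriv f w * w - f w * 1 = φ w := by rw [hφdef]; ring
    rw [this, norm_div, norm_pow]
    rw [div_le_iff₀ (by positivity)]
    calc ‖φ w‖ ≤ ‖w‖ ^ 2 * (1 / 2) := hkey w hw
      _ = 1 / 2 * ‖w‖ ^ 2 := by ring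
  have hderiv : ∀ w ∈ ball (0 : ℂ) 1, ‖deriv g w‖ ≤ 1 / 2 := by
    intro w hw
    rcases eq_or_ne w 0 with rfl | hw0
    · have hga' : AnalyticOnNhd ℂ (deriv g) (ball 0 1) := hga.deriv
      have hcont : ContinuousAt (deriv g) 0 := (hga' 0 h01).continuousAt
      have htends : Tendsto (fun z => ‖deriv g z‖) (𝓝[≠] (0 : ℂ)) (𝓝 ‖deriv g 0‖) :=
        (hcont.tendsto.mono_left nhdsWithin_le_nhds).norm
      refine le_of_tendsto htends ?_
      have : ∀ᶠ z in 𝓝 (0 : ℂ), z ∈ ball (0 : ℂ) 1 := isOpen_ball.eventually_mem h01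
      filter_upwards [nhdsWithin_le_nhds this, self_mem_nhdsWithin] with z hz hz0
      exact hderiv_ne z hz hz0
    · exact hderiv_ne w hw hw0
  -- mean value: ‖g z - 1‖ ≤ ‖z‖ / 2
  have hgbound : ∀ z ∈ ball (0 : ℂ) 1, ‖g z - 1‖ ≤ 1 / 2 * ‖z‖ := by
    intro z hz
    have h := (convex_ball (0 : ℂ) 1).norm_image_sub_le_of_norm_deriv_le
      (fun x hx => (hga x hx).differentiableAt)
      hderiv h01 hz
    rw [hg0, sub_zero] at h
    exact h
  -- conclusion
  intro z hz hz0
  have hzn : (0 : ℝ) < ‖z‖ := norm_pos_iff.mpr hz0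
  have hz1 : ‖z‖ < 1 := by simpa [mem_ball, dist_zero_right] using hz
  have hgzb : 1 - 1 / 2 * ‖z‖ ≤ ‖g z‖ := by
    have h := hgbound z hz
    have := norm_sub_norm_le (g z - 1) (g z)
    have h1n : ‖(1 : ℂ)‖ = 1 := by simp
    calc 1 - 1 / 2 * ‖z‖ ≤ 1 - ‖g z - 1‖ := by linarith
      _ ≤ ‖g z‖ := by
          have := norm_sub_norm_le (1 : ℂ) (g z)
          have h2 : ‖(1 : ℂ) - g z‖ = ‖g z - 1‖ := by rw [norm_sub_rev]
          rw [h2, h1n] at this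
          linarith
  have hfz : f z = z * g z := by
    rw [hgz z hz0]; field_simp
  have hfzn : ‖z‖ ^ 2 * (1 / 2) < ‖f z‖ := by
    rw [hfz, norm_mul]
    have : ‖z‖ * (1 - 1 / 2 * ‖z‖) ≤ ‖z‖ * ‖g z‖ :=
      mul_le_mul_of_nonneg_left hgzb hzn.le
    nlinarith
  have hφlt : ‖φ z‖ < ‖f z‖ := lt_of_le_of_lt (hkey z hz) hfzn
  have hfne : f z ≠ 0 := by
    intro h
    rw [h, norm_zero] at hfzn
    nlinarith
  refine ⟨hfne, ?_⟩
  have hquot : z * deriv f z / f z = 1 + φ z / f z := by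
    rw [hφdef]
    field_simp
    ring
  rw [hquot]
  have hnormlt : ‖φ z / f z‖ < 1 := by
    rw [norm_div, div_lt_one (norm_pos_iff.mpr hfne)]
    exact hφlt
  have hre : -(1 : ℝ) < (φ z / f z).re := by
    have := Complex.abs_re_le_norm (φ z / f z)
    have habs : |(φ z / f z).re| < 1 := lt_of_le_of_lt this hnormlt
    have := abs_lt.mp habs
    linarith [this.1]
  simp only [Complex.add_re, Complex.one_re]
  linarith
end

section
/- Every function f in the class Ω satisfies Re(f'(z)) > 0 for all z in the unit disc; in particular, Re(f'(z)) ≥ 1 - |z| > 0. -/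
open Metric

theorem stmt_5 (f : ℂ → ℂ) (hf : AnalyticOnNhd ℂ f (ball 0 1))
    (hf0 : f 0 = 0) (hf1 : deriv f 0 = 1)
    (hΩ : ∀ z ∈ ball (0 : ℂ) 1, ‖z * deriv f z - f z‖ < 1 / 2) :
    ∀ z ∈ ball (0 : ℂ) 1, 1 - ‖z‖ ≤ (deriv f z).re ∧ 0 < (deriv f z).re := by
  set g : ℂ → ℂ := fun z => z * deriv f z - f z with hg_def
  have hg0 : g 0 = 0 := by simp [hg_def, hf0]
  have hfd : DifferentiableOn ℂ f (ball 0 1) := hf.differentiableOn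
  have hball : ball (0:ℂ) 1 ∈ nhds (0:ℂ) := ball_mem_nhds _ one_pos
  have hgA : AnalyticOnNhd ℂ g (ball 0 1) :=
    (AnalyticOnNhd.mul analyticOnNhd_id hf.deriv).sub hf
  have hgd : DifferentiableOn ℂ g (ball 0 1) := hgA.differentiableOn
  -- derivative of g at 0 is 0
  have hdg0 : deriv g 0 = 0 := by
    have hdf : DifferentiableAt ℂ (deriv f) 0 :=
      (hf.deriv 0 (mem_ball_self one_pos)).differentiableAt
    have h1 : HasDerivAt (fun z : ℂ => z * deriv f z)
        (1 * deriv f 0 + 0 * deriv (deriv f) 0) 0 :=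
      (hasDerivAt_id 0).mul hdf.hasDerivAt
    have h2 : HasDerivAt f (deriv f 0) 0 :=
      ((hf 0 (mem_ball_self one_pos)).differentiableAt).hasDerivAt
    have h3 : HasDerivAt g (1 * deriv f 0 + 0 * deriv (deriv f) 0 - deriv f 0) 0 := h1.sub h2
    have := h3.deriv
    simpa using this
  set g₁ : ℂ → ℂ := dslope g 0 with hg1_def
  set g₂ : ℂ → ℂ := dslope g₁ 0 with hg2_def
  have hg1d : DifferentiableOn ℂ g₁ (ball 0 1) :=
    (Complex.differentiableOn_dslope hball).mpr hgd
  have hg10 : g₁ 0 = 0 := by simp [hg1_def, hdg0]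
  -- first Schwarz: ‖g₁ z‖ ≤ 1/2 on the ball
  have hG1 : ∀ z ∈ ball (0:ℂ) 1, ‖g₁ z‖ ≤ 1/2 := by
    intro z hz
    have := Complex.norm_dslope_le_div_of_mapsTo_ball hgd
      (R₂ := 1/2) (fun w hw => by simpa [hg0, mem_closedBall, dist_eq_norm] using (hΩ w hw).le) hz
    simpa using this
  -- second Schwarz: ‖g₂ z‖ ≤ 1/2 on the ball
  have hG2 : ∀ z ∈ ball (0:ℂ) 1, ‖g₂ z‖ ≤ 1/2 := by
    intro z hz
    refine le_of_forall_pos_le_add fun ε hε => ?_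
    have hmaps : Set.MapsTo g₁ (ball 0 1) (closedBall (g₁ 0) (1/2 + ε)) := by
      intro w hw
      simp only [mem_closedBall, dist_eq_norm, hg10, sub_zero]
      exact le_trans (hG1 w hw) (by linarith)
    have := Complex.norm_dslope_le_div_of_mapsTo_ball hg1d hmaps hz
    simpa using this
  -- pointwise formulas off 0
  have hg1_eq : ∀ z : ℂ, z ≠ 0 → g₁ z = g z / z := by
    intro z hz
    simp [hg1_def, dslope_of_ne _ hz, slope_def_field, hg0]
  have hg2_eq : ∀ z : ℂ, z ≠ 0 → g₂ z = g z / z ^ 2 := by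
    intro z hz
    rw [hg2_def, dslope_of_ne _ hz, slope_def_field, hg10, hg1_eq z hz,
      sub_zero, sub_zero, div_div, sq]
  set h : ℂ → ℂ := dslope f 0 with hh_def
  have hhd : DifferentiableOn ℂ h (ball 0 1) :=
    (Complex.differentiableOn_dslope hball).mpr hfd
  have hh0 : h 0 = 1 := by simp [hh_def, hf1]
  have hh_eq : ∀ z : ℂ, z ≠ 0 → h z = f z / z := by
    intro z hz
    simp [hh_def, dslope_of_ne _ hz, slope_def_field, hf0]
  -- the derivative of h equals g₂ off 0
  have hderiv_h : ∀ z ∈ ball (0:ℂ) 1, z ≠ 0 → deriv h z = g₂ z := by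
    intro z hz hz0
    have hev : h =ᶠ[nhds z] fun w => f w / w := by
      filter_upwards [isOpen_compl_singleton.mem_nhds (by simpa using hz0)] with w hw
      exact hh_eq w hw
    rw [hev.deriv_eq]
    have hdfz : DifferentiableAt ℂ f z := (hf z hz).differentiableAt
    rw [deriv_fun_div hdfz differentiableAt_fun_id hz0]
    rw [hg2_eq z hz0]
    simp only [hg_def, deriv_id'']
    field_simp
  -- bound on deriv h everywhere on the ball, including 0
  have hderiv_bound : ∀ z ∈ ball (0:ℂ) 1, ‖deriv h z‖ ≤ 1/2 := by
    intro z hz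
    rcases eq_or_ne z 0 with rfl | hz0
    · -- limit argument at 0
      have hA : AnalyticOnNhd ℂ h (ball 0 1) := hhd.analyticOnNhd isOpen_ball
      have hcont : ContinuousAt (deriv h) 0 :=
        (hA.deriv 0 hz).continuousAt
      have htend : Filter.Tendsto (fun w => ‖deriv h w‖) (nhdsWithin 0 {(0:ℂ)}ᶜ)
          (nhds ‖deriv h 0‖) :=
        ((continuous_norm.continuousAt).comp hcont).tendsto.mono_left
          nhdsWithin_le_nhds
      refine le_of_tendsto htend ?_
      filter_upwards [nhdsWithin_le_nhds (isOpen_ball.mem_nhds hz),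
        self_mem_nhdsWithin] with w hw hw0
      rw [hderiv_h w hw hw0]
      exact hG2 w hw
    · rw [hderiv_h z hz hz0]; exact hG2 z hz
  -- mean value: ‖h z - 1‖ ≤ ‖z‖/2
  have hh_bound : ∀ z ∈ ball (0:ℂ) 1, ‖h z - 1‖ ≤ ‖z‖ / 2 := by
    intro z hz
    have := (convex_ball (0:ℂ) 1).norm_image_sub_le_of_norm_hasDerivWithin_le
      (f := h) (f' := deriv h) (C := 1/2)
      (fun w hw => ((hhd.differentiableAt
        (isOpen_ball.mem_nhds hw)).hasDerivAt).hasDerivWithinAt)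
      hderiv_bound hz (mem_ball_self one_pos)
    calc ‖h z - 1‖ = ‖h 0 - h z‖ := by rw [hh0, norm_sub_rev]
      _ ≤ 1/2 * ‖0 - z‖ := this
      _ = ‖z‖ / 2 := by rw [zero_sub, norm_neg]; ring
  -- main estimate: ‖deriv f z - 1‖ ≤ ‖z‖
  have hmain : ∀ z ∈ ball (0:ℂ) 1, ‖deriv f z - 1‖ ≤ ‖z‖ := by
    intro z hz
    rcases eq_or_ne z 0 with rfl | hz0
    · simp [hf1]
    · have hdecomp : deriv f z = g₁ z + h z := by
        rw [hg1_eq z hz0, hh_eq z hz0, hg_def]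
        field_simp
        ring
      have hg1z : ‖g₁ z‖ ≤ ‖z‖ / 2 := by
        have : g₁ z = z * g₂ z := by
          rw [hg1_eq z hz0, hg2_eq z hz0]
          field_simp
        rw [this, norm_mul]
        calc ‖z‖ * ‖g₂ z‖ ≤ ‖z‖ * (1/2) :=
              mul_le_mul_of_nonneg_left (hG2 z hz) (norm_nonneg z)
          _ = ‖z‖ / 2 := by ring
      calc ‖deriv f z - 1‖ = ‖g₁ z + (h z - 1)‖ := by rw [hdecomp]; ring_nf
        _ ≤ ‖g₁ z‖ + ‖h z - 1‖ := norm_add_le _ _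
        _ ≤ ‖z‖/2 + ‖z‖/2 := add_le_add hg1z (hh_bound z hz)
        _ = ‖z‖ := by ring
  intro z hz
  have hz1 : ‖z‖ < 1 := by simpa [mem_ball, dist_eq_norm] using hz
  have hre : 1 - ‖z‖ ≤ (deriv f z).re := by
    have h1 : (1 - deriv f z).re ≤ ‖(1 : ℂ) - deriv f z‖ := Complex.re_le_norm _
    rw [norm_sub_rev] at h1
    have := hmain z hz
    have h2 : (1 - deriv f z).re = 1 - (deriv f z).re := by simp
    linarith
  exact ⟨hre, by linarith⟩
end

section
/- (Keogh–Merkes) Let p(z) = 1 + p₁z + p₂z² + ⋯ be analytic on the unit disc with Re p(z) > 0. Then for any complex number μ, |p₂ - μ p₁²| ≤ 2 max{1, |2μ - 1|}. -/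
open Metric

open ComplexConjugate in
private lemma km_key_ineq (a w : ℂ) (ha : ‖a‖ < 1) (hw : ‖w‖ < 1) :
    ‖w - a‖ < ‖1 - conj a * w‖ := by
  have hid : Complex.normSq (1 - conj a * w) - Complex.normSq (w - a)
      = (1 - Complex.normSq a) * (1 - Complex.normSq w) := by
    simp only [Complex.normSq_apply, Complex.sub_re, Complex.sub_im, Complex.mul_re,
      Complex.mul_im, Complex.one_re, Complex.one_im, Complex.conj_re, Complex.conj_im]
    ring
  have h1 : ∀ z : ℂ, Complex.normSq z = ‖z‖ ^ 2 := by
    intro z; rw [Complex.sq_norm]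
  rw [h1, h1, h1, h1] at hid
  have p1 : (0:ℝ) < 1 - ‖a‖ ^ 2 := by nlinarith [norm_nonneg a]
  have p2 : (0:ℝ) < 1 - ‖w‖ ^ 2 := by nlinarith [norm_nonneg w]
  have h2 : ‖w - a‖ ^ 2 < ‖1 - conj a * w‖ ^ 2 := by nlinarith [mul_pos p1 p2]
  exact lt_of_pow_lt_pow_left₀ 2 (norm_nonneg _) h2

open ComplexConjugate in
/-- Schwarz–Pick type bound at the origin for a map of the unit disc into the closed unit disc. -/
private lemma km_schwarz_pick (g : ℂ → ℂ)
    (hd : ∀ z ∈ ball (0 : ℂ) 1, DifferentiableAt ℂ g z)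
    (hg : ∀ z ∈ ball (0 : ℂ) 1, ‖g z‖ ≤ 1) :
    ‖deriv g 0‖ ≤ 1 - ‖g 0‖ ^ 2 := by
  have h0 : (0 : ℂ) ∈ ball (0 : ℂ) 1 := by simp
  have hga : ‖g 0‖ ≤ 1 := hg 0 h0
  by_cases hconst : ∀ z ∈ ball (0 : ℂ) 1, g z = g 0
  · have hev : g =ᶠ[nhds (0 : ℂ)] (fun _ => g 0) :=
      Filter.eventuallyEq_of_mem (isOpen_ball.mem_nhds h0) hconst
    rw [hev.deriv_eq, deriv_const]
    simp only [norm_zero]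
    nlinarith [norm_nonneg (g 0)]
  · -- strict maximum principle: ‖g z‖ < 1 on the ball
    have hlt : ∀ z ∈ ball (0 : ℂ) 1, ‖g z‖ < 1 := by
      intro z hz
      rcases lt_or_eq_of_le (hg z hz) with h | h
      · exact h
      · exfalso
        have hmax : IsMaxOn (norm ∘ g) (ball (0 : ℂ) 1) z := by
          intro y hy; simpa [h] using hg y hy
        have := Complex.eqOn_of_isPreconnected_of_isMaxOn_norm
          (convex_ball (0 : ℂ) 1).isPreconnected isOpen_ball
          (fun y hy => (hd y hy).differentiableWithinAt) hz hmax
        exact hconst (fun y hy => (this hy).trans (this h0).symm)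
    set a := g 0 with ha_def
    have ha : ‖a‖ < 1 := hlt 0 h0
    have hsq : (0 : ℝ) < 1 - ‖a‖ ^ 2 := by nlinarith [norm_nonneg a]
    have hden : ∀ z ∈ ball (0 : ℂ) 1, (1 : ℂ) - conj a * g z ≠ 0 := by
      intro z hz
      have hx : ‖conj a * g z‖ < 1 := by
        rw [norm_mul]
        calc ‖conj a‖ * ‖g z‖ ≤ ‖conj a‖ * 1 :=
              mul_le_mul_of_nonneg_left (hg z hz) (norm_nonneg _)
          _ = ‖a‖ := by simp
          _ < 1 := ha
      intro h
      have h' : (1 : ℂ) = conj a * g z := sub_eq_zero.mp h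
      rw [← h'] at hx; simp at hx
    set h : ℂ → ℂ := fun z => (g z - a) / (1 - conj a * g z) with hh_def
    have hh0 : h 0 = 0 := by simp [hh_def, ← ha_def]
    have hhd : DifferentiableOn ℂ h (ball (0 : ℂ) 1) := by
      intro z hz
      exact (((hd z hz).sub_const a).div
        (((hd z hz).const_mul (conj a)).const_sub 1) (hden z hz)).differentiableWithinAt
    have hmaps : Set.MapsTo h (ball (0 : ℂ) 1) (ball (h 0) 1) := by
      intro z hz
      rw [hh0, mem_ball, dist_zero_right, hh_def]
      rw [norm_div]
      have hd0 : 0 < ‖(1 : ℂ) - conj a * g z‖ := norm_pos_iff.mpr (hden z hz)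
      rw [div_lt_one hd0]
      exact km_key_ineq a (g z) ha (hlt z hz)
    have hschwarz : ‖deriv h 0‖ ≤ 1 / 1 :=
      Complex.norm_deriv_le_div_of_mapsTo_ball hhd (hmaps.mono_right ball_subset_closedBall) one_pos
    have hd0 : DifferentiableAt ℂ g 0 := hd 0 h0
    have hderiv : deriv h 0 = deriv g 0 / (1 - conj a * a) := by
      rw [hh_def]
      rw [deriv_fun_div (hd0.sub_const a) ((hd0.const_mul (conj a)).const_sub 1) (hden 0 h0)]
      rw [deriv_sub_const, deriv_const_sub, deriv_const_mul _ hd0]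
      rw [← ha_def]
      have hne : (1 : ℂ) - conj a * a ≠ 0 := by
        have := hden 0 h0; rwa [← ha_def] at this
      field_simp
      ring
    have hca : conj a * a = (Complex.normSq a : ℂ) := by
      rw [mul_comm]; exact Complex.mul_conj a
    have hns : Complex.normSq a = ‖a‖ ^ 2 := by rw [Complex.sq_norm]
    have hnorm : ‖deriv h 0‖ = ‖deriv g 0‖ / (1 - ‖a‖ ^ 2) := by
      rw [hderiv, hca, hns, norm_div]
      congr 1
      rw [show (1 : ℂ) - ((‖a‖ ^ 2 : ℝ) : ℂ) = ((1 - ‖a‖ ^ 2 : ℝ) : ℂ) by push_cast; ring,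
        Complex.norm_real]
      exact abs_of_pos hsq
    rw [hnorm] at hschwarz
    rw [div_le_div_iff₀ hsq (by norm_num : (0:ℝ) < 1)] at hschwarz
    · linarith
  
open ComplexConjugate in
theorem stmt_13 (p : ℂ → ℂ) (hp : AnalyticOnNhd ℂ p (ball 0 1))
    (hp0 : p 0 = 1) (hre : ∀ z ∈ ball (0 : ℂ) 1, 0 < (p z).re) :
    ∀ μ : ℂ, ‖iteratedDeriv 2 p 0 / 2 - μ * (deriv p 0) ^ 2‖ ≤
      2 * max 1 ‖2 * μ - 1‖ := by
  intro μ
  have h0 : (0:ℂ) ∈ ball (0:ℂ) 1 := by simp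
  have hq : ∀ z ∈ ball (0:ℂ) 1, p z + 1 ≠ 0 := by
    intro z hz h
    have h1 : (p z + 1).re = 0 := by rw [h]; simp
    have h2 := hre z hz
    rw [Complex.add_re, Complex.one_re] at h1
    linarith
  set ω : ℂ → ℂ := fun z => (p z - 1) / (p z + 1) with hω_def
  have hω_an : AnalyticOnNhd ℂ ω (ball 0 1) :=
    (hp.sub analyticOnNhd_const).div (hp.add analyticOnNhd_const) hq
  have hω0 : ω 0 = 0 := by simp [hω_def, hp0]
  have hωd : ∀ z ∈ ball (0:ℂ) 1, DifferentiableAt ℂ ω z :=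
    fun z hz => (hω_an z hz).differentiableAt
  have hωlt : ∀ z ∈ ball (0:ℂ) 1, ‖ω z‖ < 1 := by
    intro z hz
    have hne := hq z hz
    have hpos : 0 < ‖p z + 1‖ := norm_pos_iff.mpr hne
    rw [hω_def]
    rw [norm_div, div_lt_one hpos]
    have e1 : ∀ w : ℂ, ‖w‖^2 = Complex.normSq w := fun w => by
      rw [Complex.sq_norm]
    have h2 : ‖p z - 1‖^2 < ‖p z + 1‖^2 := by
      rw [e1, e1]
      simp only [Complex.normSq_apply, Complex.sub_re, Complex.sub_im, Complex.add_re,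
        Complex.add_im, Complex.one_re, Complex.one_im]
      nlinarith [hre z hz]
    exact lt_of_pow_lt_pow_left₀ 2 (norm_nonneg _) h2
  set g : ℂ → ℂ := dslope ω 0 with hg_def
  have hg_le : ∀ z ∈ ball (0:ℂ) 1, ‖g z‖ ≤ 1 := by
    intro z hz
    have hmaps : Set.MapsTo ω (ball (0:ℂ) 1) (ball (ω 0) 1) := by
      intro y hy; rw [hω0, mem_ball, dist_zero_right]; exact hωlt y hy
    have := Complex.norm_dslope_le_div_of_mapsTo_ball
      (fun y hy => (hωd y hy).differentiableWithinAt) (hmaps.mono_right ball_subset_closedBall) hz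
    simpa using this
  have hg_an0 : AnalyticAt ℂ g 0 := by
    obtain ⟨q, hq'⟩ := hω_an 0 h0
    exact (hq'.has_fpower_series_dslope_fslope).analyticAt
  have hg_d : ∀ z ∈ ball (0:ℂ) 1, DifferentiableAt ℂ g z := by
    intro z hz
    rcases eq_or_ne z 0 with rfl | hne
    · exact hg_an0.differentiableAt
    · exact (differentiableAt_dslope_of_ne hne).mpr (hωd z hz)
  have hωg : ω = fun z => z * g z := by
    funext z
    have h := sub_smul_dslope ω 0 z
    rw [hω0, sub_zero, sub_zero] at h
    rw [← h, hg_def, smul_eq_mul]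
  have hωderiv : ∀ z ∈ ball (0:ℂ) 1, deriv ω z = 2 * deriv p z / (p z + 1)^2 := by
    intro z hz
    have hpd : DifferentiableAt ℂ p z := (hp z hz).differentiableAt
    rw [hω_def]
    rw [deriv_fun_div (hpd.sub_const 1) (hpd.add_const 1) (hq z hz)]
    rw [deriv_sub_const, deriv_add_const]
    have hne := hq z hz
    field_simp
    ring
  -- first coefficient
  have hc1 : g 0 = deriv p 0 / 2 := by
    rw [hg_def, dslope_same, hωderiv 0 h0, hp0]
    norm_num
    ring
  -- second derivative of ω at 0, expressed through p
  have hdp0 : DifferentiableAt ℂ (deriv p) 0 := (hp.deriv 0 h0).differentiableAt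
  have hp0d : DifferentiableAt ℂ p 0 := (hp 0 h0).differentiableAt
  have hA : deriv (deriv ω) 0 = (deriv (deriv p) 0 - (deriv p 0)^2) / 2 := by
    have hev1 : deriv ω =ᶠ[nhds 0] (fun z => 2 * deriv p z / (p z + 1)^2) :=
      Filter.eventuallyEq_of_mem (isOpen_ball.mem_nhds h0) hωderiv
    rw [hev1.deriv_eq]
    have hden2 : ((p 0 + 1)^2 : ℂ) ≠ 0 := by rw [hp0]; norm_num
    have hsqfun : (fun z => (p z + 1)^2) = fun z => (p z + 1) * (p z + 1) := by
      funext z; ring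
    rw [deriv_fun_div (hdp0.const_mul 2) (show DifferentiableAt ℂ (fun z => (p z + 1)^2) 0 from ((hp0d.add_const 1)).pow 2) hden2]
    rw [deriv_const_mul _ hdp0, hsqfun,
      deriv_fun_mul (hp0d.add_const 1) (hp0d.add_const 1), deriv_add_const]
    rw [hp0]
    norm_num
    ring
  -- second derivative of ω at 0, expressed through g
  have hdg0 : DifferentiableAt ℂ (deriv g) 0 := by
    rcases Filter.eventually_iff_exists_mem.mp hg_an0.eventually_analyticAt with ⟨t, ht, hta⟩
    rcases _root_.mem_nhds_iff.mp ht with ⟨s, hst, hso, h0s⟩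
    have : AnalyticOnNhd ℂ g s := fun y hy => hta y (hst hy)
    exact (this.deriv 0 h0s).differentiableAt
  have hB : deriv (deriv ω) 0 = 2 * deriv g 0 := by
    have hgderiv : ∀ z ∈ ball (0:ℂ) 1, deriv ω z = g z + z * deriv g z := by
      intro z hz
      rw [hωg, deriv_fun_mul differentiableAt_fun_id (hg_d z hz)]
      simp
    have hev2 : deriv ω =ᶠ[nhds 0] (fun z => g z + z * deriv g z) :=
      Filter.eventuallyEq_of_mem (isOpen_ball.mem_nhds h0) hgderiv
    rw [hev2.deriv_eq]
    rw [deriv_fun_add (hg_d 0 h0) (show DifferentiableAt ℂ (fun z => z * deriv g z) 0 from differentiableAt_fun_id.mul hdg0),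
      deriv_fun_mul differentiableAt_fun_id hdg0]
    simp
    ring
  have hcomb : 2 * deriv g 0 = (deriv (deriv p) 0 - (deriv p 0)^2) / 2 := by
    rw [← hB, hA]
  have hsp : ‖deriv g 0‖ ≤ 1 - ‖g 0‖ ^ 2 := km_schwarz_pick g hg_d hg_le
  have hit : iteratedDeriv 2 p 0 = deriv (deriv p) 0 := by
    rw [show (2:ℕ) = 1 + 1 from rfl, iteratedDeriv_succ, iteratedDeriv_one]
  have hT : iteratedDeriv 2 p 0 / 2 - μ * (deriv p 0)^2
      = 2 * deriv g 0 + 2 * (1 - 2*μ) * (g 0)^2 := by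
    rw [hit]
    linear_combination (-1 : ℂ) * hcomb + (-2*(1 - 2*μ)*(g 0 + deriv p 0 / 2)) * hc1
  rw [hT]
  have h1 : ‖2 * deriv g 0 + 2 * (1 - 2*μ) * (g 0)^2‖
      ≤ 2 * ‖deriv g 0‖ + 2 * ‖2*μ - 1‖ * ‖g 0‖^2 := by
    calc ‖2 * deriv g 0 + 2 * (1 - 2*μ) * (g 0)^2‖
        ≤ ‖2 * deriv g 0‖ + ‖2 * (1 - 2*μ) * (g 0)^2‖ := norm_add_le _ _
      _ = 2 * ‖deriv g 0‖ + 2 * ‖2*μ - 1‖ * ‖g 0‖^2 := by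
          rw [norm_mul, norm_mul, norm_mul, norm_pow]
          rw [show (1 : ℂ) - 2*μ = -(2*μ - 1) by ring, norm_neg]
          norm_num
  have h3 : ‖g 0‖ ≤ 1 := hg_le 0 h0
  have hM1 : (1:ℝ) ≤ max 1 ‖2*μ - 1‖ := le_max_left _ _
  have hM2 : ‖2*μ - 1‖ ≤ max 1 ‖2*μ - 1‖ := le_max_right _ _
  have ht1 : ‖g 0‖^2 ≤ 1 := by nlinarith [norm_nonneg (g 0)]
  nlinarith [mul_nonneg (sub_nonneg.mpr hM1) (sub_nonneg.mpr ht1),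
    mul_nonneg (sub_nonneg.mpr hM2) (sq_nonneg ‖g 0‖), norm_nonneg (deriv g 0)]
end

section
/- (Fekete–Szegő problem for Ω) Let f(z) = z + a₂z² + a₃z³ + ⋯ belong to the class Ω. Then for any complex number μ, |a₃ - μ a₂²| ≤ (1/4) max{1, |μ|}. -/
open Metric Set Filter
open scoped Topology

/-- Pointwise Möbius inequality: if `‖a‖ ≤ 1` and `‖b‖ ≤ 1` then `‖a - b‖ ≤ ‖1 - conj b * a‖`. -/
lemma mob_aux (a b : ℂ) (ha : ‖a‖ ≤ 1) (hb : ‖b‖ ≤ 1) :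
    ‖a - b‖ ≤ ‖1 - (starRingEnd ℂ) b * a‖ := by
  have ha' : Complex.normSq a ≤ 1 := by
    rw [Complex.normSq_eq_norm_sq]
    nlinarith [norm_nonneg a, ha]
  have hb' : Complex.normSq b ≤ 1 := by
    rw [Complex.normSq_eq_norm_sq]
    nlinarith [norm_nonneg b, hb]
  have key : Complex.normSq (1 - (starRingEnd ℂ) b * a) - Complex.normSq (a - b)
      = (1 - Complex.normSq a) * (1 - Complex.normSq b) := by
    simp only [Complex.normSq_apply, Complex.sub_re, Complex.sub_im, Complex.mul_re,
      Complex.mul_im, Complex.one_re, Complex.one_im, Complex.conj_re, Complex.conj_im]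
    ring
  have h1 : Complex.normSq (a - b) ≤ Complex.normSq (1 - (starRingEnd ℂ) b * a) := by nlinarith
  rw [Complex.norm_def, Complex.norm_def]
  exact Real.sqrt_le_sqrt h1

set_option maxHeartbeats 1000000 in
theorem stmt_14 (f : ℂ → ℂ) (hf : AnalyticOnNhd ℂ f (ball 0 1))
    (hf0 : f 0 = 0) (hf1 : deriv f 0 = 1)
    (hΩ : ∀ z ∈ ball (0 : ℂ) 1, ‖z * deriv f z - f z‖ < 1 / 2) :
    ∀ μ : ℂ, ‖iteratedDeriv 3 f 0 / 6 - μ * (iteratedDeriv 2 f 0 / 2) ^ 2‖ ≤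
      (1 / 4) * max 1 ‖μ‖ := by
  have h0b : (0:ℂ) ∈ ball (0:ℂ) 1 := mem_ball_self one_pos
  set D : ℂ → ℂ := deriv f with hD
  set D2 : ℂ → ℂ := deriv D with hD2
  set D3 : ℂ → ℂ := deriv D2 with hD3
  set D4 : ℂ → ℂ := deriv D3 with hD4
  set F : ℂ → ℂ := fun z => 2 * (z * D z - f z) with hFdef
  have hd1 : ∀ z ∈ ball (0:ℂ) 1, HasDerivAt f (D z) z :=
    fun z hz => (hf z hz).differentiableAt.hasDerivAt
  have hd2 : ∀ z ∈ ball (0:ℂ) 1, HasDerivAt D (D2 z) z :=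
    fun z hz => (hf.deriv z hz).differentiableAt.hasDerivAt
  have hd3 : ∀ z ∈ ball (0:ℂ) 1, HasDerivAt D2 (D3 z) z :=
    fun z hz => (hf.deriv.deriv z hz).differentiableAt.hasDerivAt
  have hd4 : ∀ z ∈ ball (0:ℂ) 1, HasDerivAt D3 (D4 z) z :=
    fun z hz => (hf.deriv.deriv.deriv z hz).differentiableAt.hasDerivAt
  -- F is analytic, F 0 = 0
  have hFan : AnalyticOnNhd ℂ F (ball 0 1) := by
    intro z hz
    exact analyticAt_const.mul ((analyticAt_id.mul (hf.deriv z hz)).sub (hf z hz))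
  have hF0 : F 0 = 0 := by simp [hFdef, hf0]
  -- first derivative of F
  have hFd : ∀ z ∈ ball (0:ℂ) 1, HasDerivAt F (2 * (z * D2 z)) z := by
    intro z hz
    have h := (((hasDerivAt_id z).mul (hd2 z hz)).sub (hd1 z hz)).const_mul (2:ℂ)
    simp only [id_eq] at h
    exact h.congr_deriv (by ring)
  have hFderiv : ∀ z ∈ ball (0:ℂ) 1, deriv F z = 2 * (z * D2 z) :=
    fun z hz => (hFd z hz).deriv
  have hF'0 : deriv F 0 = 0 := by simpa using hFderiv 0 h0b
  -- second derivative of F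
  have hG1d : ∀ z ∈ ball (0:ℂ) 1, HasDerivAt (fun w => 2 * (w * D2 w)) (2 * (D2 z + z * D3 z)) z := by
    intro z hz
    have h := ((hasDerivAt_id z).mul (hd3 z hz)).const_mul (2:ℂ)
    simp only [id_eq] at h
    exact h.congr_deriv (by ring)
  have hFd2 : ∀ z ∈ ball (0:ℂ) 1, deriv (deriv F) z = 2 * (D2 z + z * D3 z) := by
    intro z hz
    have hev : deriv F =ᶠ[𝓝 z] fun w => 2 * (w * D2 w) :=
      eventually_of_mem (isOpen_ball.mem_nhds hz) (fun w hw => hFderiv w hw)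
    rw [hev.deriv_eq]
    exact (hG1d z hz).deriv
  have hFd3 : deriv (deriv (deriv F)) 0 = 4 * D3 0 := by
    have hev : deriv (deriv F) =ᶠ[𝓝 (0:ℂ)] fun w => 2 * (D2 w + w * D3 w) :=
      eventually_of_mem (isOpen_ball.mem_nhds h0b) (fun w hw => hFd2 w hw)
    rw [hev.deriv_eq]
    have h := ((hd3 0 h0b).const_mul (2:ℂ)).add (((hasDerivAt_id (0:ℂ)).mul (hd4 0 h0b)).const_mul (2:ℂ))
    simp only [id_eq] at h
    have h2 : HasDerivAt (fun w => 2 * (D2 w + w * D3 w)) (4 * D3 0) 0 := by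
      have e : (fun w => 2 * (D2 w + w * D3 w)) = ((fun y => 2 * D2 y) + fun y => 2 * ((id : ℂ → ℂ) * D3) y) := by
        funext w; simp only [Pi.add_apply, Pi.mul_apply, id_eq]; ring
      rw [e]
      exact h.congr_deriv (by ring : 2 * D3 0 + 2 * (1 * D3 0 + 0 * D4 0) = 4 * D3 0)
    rw [h2.deriv]
  have iD2F : iteratedDeriv 2 F 0 = 2 * D2 0 := by
    rw [iteratedDeriv_succ, iteratedDeriv_one]
    simpa using hFd2 0 h0b
  have iD3F : iteratedDeriv 3 F 0 = 4 * D3 0 := by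
    rw [iteratedDeriv_succ, iteratedDeriv_succ, iteratedDeriv_one]
    exact hFd3
  -- power series of F at 0
  obtain ⟨q, hq⟩ := hFan 0 h0b
  have hc2 : (Nat.factorial 2) • q.coeff 2 = iteratedDeriv 2 F 0 := by
    obtain ⟨r, hqr⟩ := hq
    rw [iteratedDeriv_eq_iteratedFDeriv]
    exact hqr.factorial_smul (1:ℂ) 2
  have hc3 : (Nat.factorial 3) • q.coeff 3 = iteratedDeriv 3 F 0 := by
    obtain ⟨r, hqr⟩ := hq
    rw [iteratedDeriv_eq_iteratedFDeriv]
    exact hqr.factorial_smul (1:ℂ) 3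
  set φ1 : ℂ → ℂ := dslope F 0 with hφ1def
  set φ : ℂ → ℂ := dslope φ1 0 with hφdef
  have hq1 : HasFPowerSeriesAt φ1 q.fslope 0 := hq.has_fpower_series_dslope_fslope
  have hq2 : HasFPowerSeriesAt φ q.fslope.fslope 0 := hq1.has_fpower_series_dslope_fslope
  have hphi0 : φ 0 = q.coeff 2 := by
    have h : q.fslope.fslope.coeff 0 = φ 0 := hq2.coeff_zero 1
    rw [FormalMultilinearSeries.coeff_fslope, FormalMultilinearSeries.coeff_fslope] at h
    exact h.symm
  have hphi1 : deriv φ 0 = q.coeff 3 := by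
    have h : deriv φ 0 = q.fslope.fslope.coeff 1 := hq2.deriv
    rw [FormalMultilinearSeries.coeff_fslope, FormalMultilinearSeries.coeff_fslope] at h
    exact h
  -- values of the coefficients
  have hd0val : φ 0 = D2 0 := by
    rw [hphi0]
    have h : (Nat.factorial 2) • q.coeff 2 = 2 * D2 0 := by rw [hc2, iD2F]
    have h2 : ((Nat.factorial 2 : ℕ) : ℂ) * q.coeff 2 = 2 * D2 0 := by
      rw [← h]; simp [nsmul_eq_mul]
    norm_num [Nat.factorial] at h2
    linear_combination h2
  have hd1val : deriv φ 0 = 4 * D3 0 / 6 := by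
    rw [hphi1]
    have h : (Nat.factorial 3) • q.coeff 3 = 4 * D3 0 := by rw [hc3, iD3F]
    have h2 : ((Nat.factorial 3 : ℕ) : ℂ) * q.coeff 3 = 4 * D3 0 := by
      rw [← h]; simp [nsmul_eq_mul]
    norm_num [Nat.factorial] at h2
    linear_combination h2 / 6
  -- F maps ball to ball, ‖F z‖ ≤ ‖z‖
  have hFdiff : DifferentiableOn ℂ F (ball 0 1) := hFan.differentiableOn
  have hFlt : ∀ z ∈ ball (0:ℂ) 1, ‖F z‖ < 1 := by
    intro z hz
    have := hΩ z hz
    simp only [hFdef]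
    rw [norm_mul]
    simp only [RCLike.norm_ofNat]
    linarith
  have hFmaps : MapsTo F (ball (0:ℂ) 1) (ball (0:ℂ) 1) := fun z hz =>
    mem_ball_zero_iff.2 (hFlt z hz)
  have hFle : ∀ z ∈ ball (0:ℂ) 1, ‖F z‖ ≤ ‖z‖ := by
    intro z hz
    have := Complex.norm_le_norm_of_mapsTo_ball hFdiff (hFmaps.mono_right ball_subset_closedBall) hF0
      (mem_ball_zero_iff.1 hz)
    simpa using this
  -- φ1 = F z / z, ‖φ1 z‖ ≤ ‖z‖
  have hφ1diff : DifferentiableOn ℂ φ1 (ball 0 1) :=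
    (Complex.differentiableOn_dslope (isOpen_ball.mem_nhds h0b)).mpr hFdiff
  have hφ1zero : φ1 0 = 0 := by
    rw [hφ1def, dslope_same]
    exact hF'0
  have hφ1eq : ∀ z : ℂ, z ≠ 0 → φ1 z = F z / z := by
    intro z hz
    rw [hφ1def, dslope_of_ne _ hz, slope_def_field, hF0]
    simp
  have hφ1le1 : ∀ z ∈ ball (0:ℂ) 1, ‖φ1 z‖ ≤ 1 := by
    intro z hz
    rcases eq_or_ne z 0 with rfl | hne
    · simp [hφ1zero]
    · rw [hφ1eq z hne, norm_div]
      rw [div_le_one (by simpa [norm_pos_iff] using hne)]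
      exact hFle z hz
  have hφ1le : ∀ z ∈ ball (0:ℂ) 1, ‖φ1 z‖ ≤ ‖z‖ := by
    intro z hz
    have hkey : ∀ ε : ℝ, 0 < ε → ‖φ1 z‖ ≤ ‖z‖ + ε := by
      intro ε hε
      have hmaps : MapsTo φ1 (ball (0:ℂ) 1) (ball (φ1 0) (1 + ε)) := by
        intro w hw
        rw [mem_ball, hφ1zero, dist_zero_right]
        calc ‖φ1 w‖ ≤ 1 := hφ1le1 w hw
        _ < 1 + ε := by linarith
      have := Complex.dist_le_div_mul_dist_of_mapsTo_ball hφ1diff (hmaps.mono_right ball_subset_closedBall) hz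
      rw [hφ1zero, dist_zero_right, dist_zero_right] at this
      calc ‖φ1 z‖ ≤ (1 + ε) / 1 * ‖z‖ := this
      _ = ‖z‖ + ε * ‖z‖ := by ring
      _ ≤ ‖z‖ + ε := by
          have h1 : ‖z‖ ≤ 1 := le_of_lt (mem_ball_zero_iff.1 hz)
          nlinarith
    exact le_of_forall_pos_le_add hkey
  -- φ = φ1 z / z, ‖φ z‖ ≤ 1 on the ball
  have hφdiff : DifferentiableOn ℂ φ (ball 0 1) :=
    (Complex.differentiableOn_dslope (isOpen_ball.mem_nhds h0b)).mpr hφ1diff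
  have hφeq : ∀ z : ℂ, z ≠ 0 → φ z = φ1 z / z := by
    intro z hz
    rw [hφdef, dslope_of_ne _ hz, slope_def_field, hφ1zero]
    simp
  have hφle1 : ∀ z ∈ ball (0:ℂ) 1, ‖φ z‖ ≤ 1 := by
    intro z hz
    rcases eq_or_ne z 0 with rfl | hne
    · -- by continuity
      have hcont : ContinuousAt φ 0 :=
        (hφdiff.differentiableAt (isOpen_ball.mem_nhds h0b)).continuousAt
      have htends : Tendsto φ (𝓝[≠] (0:ℂ)) (𝓝 (φ 0)) :=
        hcont.continuousWithinAt.tendsto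
      have hev : ∀ᶠ w in 𝓝[≠] (0:ℂ), ‖φ w‖ ≤ 1 := by
        filter_upwards [mem_nhdsWithin_of_mem_nhds (isOpen_ball.mem_nhds h0b),
          self_mem_nhdsWithin] with w hw hw'
        rw [hφeq w hw', norm_div]
        rw [div_le_one (by simpa [norm_pos_iff] using (hw' : w ≠ 0))]
        exact hφ1le w hw
      exact le_of_tendsto htends.norm hev
    · rw [hφeq z hne, norm_div]
      rw [div_le_one (by simpa [norm_pos_iff] using hne)]
      exact hφ1le z hz
  clear hf1 hΩ hFlt hFmaps hFle hφ1le1 hφ1le hφ1eq hφ1zero hφ1diff hFd hFderiv hF'0 hG1d hFd2 hFd3 hFdiff hFan hF0 hq hq1 hq2 hphi0 hphi1 hc2 hc3 hd1 hd2 hd3 hd4 iD2F iD3F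
  set d0 : ℂ := φ 0 with hd0def
  set d1 : ℂ := deriv φ 0 with hd1def
  set B : ℝ := ‖d0‖ with hBdef
  set s : ℝ := Complex.normSq d0 with hsdef
  have hB0 : 0 ≤ B := norm_nonneg d0
  have hB1 : B ≤ 1 := hφle1 0 h0b
  have hs0 : 0 ≤ s := Complex.normSq_nonneg d0
  have hsB : s = B^2 := by
    rw [hsdef, hBdef, Complex.normSq_eq_norm_sq]
  have hs1 : s ≤ 1 := by nlinarith
  have key : ∀ t : ℝ, t ∈ Ioo (0:ℝ) 1 →
      ‖d1‖ * (1 - t^2*s) ≤ (1 - t*s)^2 + B*((1-t)*(1-t*s)) := by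
    intro t ht
    obtain ⟨ht0, ht1⟩ := ht
    have hts : t*s < 1 := by nlinarith
    have htspos : 0 < 1 - t*s := by linarith
    have ht2s : 0 < 1 - t^2*s := by nlinarith
    set b : ℂ := ((t:ℝ):ℂ) * d0 with hbdef
    have hcb : (starRingEnd ℂ) b = ((t:ℝ):ℂ) * (starRingEnd ℂ) d0 := by
      rw [hbdef, map_mul, Complex.conj_ofReal]
    have hσ : (starRingEnd ℂ) d0 * d0 = ((s:ℝ):ℂ) := by
      rw [hsdef, mul_comm, Complex.mul_conj]
    have hbnorm : ‖b‖ = t * B := by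
      rw [hbdef, norm_mul, Complex.norm_real, Real.norm_eq_abs, abs_of_pos ht0]
    have hblt : ‖b‖ < 1 := by rw [hbnorm]; nlinarith
    have hden : ∀ z ∈ ball (0:ℂ) 1, (1:ℂ) - (starRingEnd ℂ) b * φ z ≠ 0 := by
      intro z hz heq
      rw [sub_eq_zero] at heq
      have h1 : ‖(starRingEnd ℂ) b * φ z‖ < 1 := by
        rw [norm_mul, RCLike.norm_conj]
        have := hφle1 z hz
        nlinarith [norm_nonneg (φ z), norm_nonneg b, hblt]
      rw [← heq] at h1
      simp at h1
    set Ψ : ℂ → ℂ := fun z => (φ z - b) / ((1:ℂ) - (starRingEnd ℂ) b * φ z) with hΨdef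
    have hΨdiff : DifferentiableOn ℂ Ψ (ball 0 1) := by
      apply DifferentiableOn.div
      · exact hφdiff.sub (differentiableOn_const b)
      · exact (differentiableOn_const 1).sub ((differentiableOn_const _).mul hφdiff)
      · exact hden
    have hΨle : ∀ z ∈ ball (0:ℂ) 1, ‖Ψ z‖ ≤ 1 := by
      intro z hz
      rw [hΨdef]
      simp only
      rw [norm_div, div_le_one (norm_pos_iff.2 (hden z hz))]
      exact mob_aux (φ z) b (hφle1 z hz) hblt.le
    have hderivle : ‖deriv Ψ 0‖ ≤ 1 + ‖Ψ 0‖ := by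
      refine le_of_forall_pos_le_add ?_
      intro ε hε
      have hmaps : MapsTo Ψ (ball (0:ℂ) 1) (ball (Ψ 0) (1 + ‖Ψ 0‖ + ε)) := by
        intro z hz
        rw [mem_ball]
        calc dist (Ψ z) (Ψ 0) ≤ ‖Ψ z‖ + ‖Ψ 0‖ := dist_le_norm_add_norm _ _
        _ ≤ 1 + ‖Ψ 0‖ := by linarith [hΨle z hz]
        _ < 1 + ‖Ψ 0‖ + ε := by linarith
      have h2 := Complex.norm_deriv_le_div_of_mapsTo_ball hΨdiff (hmaps.mono_right ball_subset_closedBall) one_pos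
      rw [div_one] at h2
      linarith
    -- compute deriv Ψ 0
    have hφd : HasDerivAt φ d1 0 :=
      (hφdiff.differentiableAt (isOpen_ball.mem_nhds h0b)).hasDerivAt
    have hnum : HasDerivAt (fun z => φ z - b) d1 0 := hφd.sub_const b
    have hdend : HasDerivAt (fun z => (1:ℂ) - (starRingEnd ℂ) b * φ z)
        (-((starRingEnd ℂ) b * d1)) 0 := by
      simpa using (hφd.const_mul ((starRingEnd ℂ) b)).const_sub 1
    have hΨd0 : HasDerivAt Ψ
        ((d1 * ((1:ℂ) - (starRingEnd ℂ) b * φ 0) - (φ 0 - b) * (-((starRingEnd ℂ) b * d1))) /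
          ((1:ℂ) - (starRingEnd ℂ) b * φ 0)^2) 0 := hnum.div hdend (hden 0 h0b)
    have hnum_eq : d1 * ((1:ℂ) - (starRingEnd ℂ) b * φ 0) - (φ 0 - b) * (-((starRingEnd ℂ) b * d1))
        = d1 * (1 - ((t:ℝ):ℂ)^2 * ((s:ℝ):ℂ)) := by
      rw [← hd0def, hcb, hbdef]
      linear_combination (-(((t:ℝ):ℂ))^2 * d1) * hσ
    have hden_eq : ((1:ℂ) - (starRingEnd ℂ) b * φ 0)^2 = ((1:ℂ) - ((t:ℝ):ℂ) * ((s:ℝ):ℂ))^2 := by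
      rw [← hd0def, hcb, mul_assoc, hσ]
    have hΨval : deriv Ψ 0 = d1 * (1 - ((t:ℝ):ℂ)^2 * ((s:ℝ):ℂ)) /
        ((1:ℂ) - ((t:ℝ):ℂ) * ((s:ℝ):ℂ))^2 := by
      rw [hΨd0.deriv, hnum_eq, hden_eq]
    have hnorm1 : ((1:ℂ) - ((t:ℝ):ℂ)^2 * ((s:ℝ):ℂ)) = (((1 - t^2*s : ℝ)):ℂ) := by push_cast; ring
    have hnorm2 : ((1:ℂ) - ((t:ℝ):ℂ) * ((s:ℝ):ℂ)) = (((1 - t*s : ℝ)):ℂ) := by push_cast; ring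
    have hderivnorm : ‖deriv Ψ 0‖ = ‖d1‖ * (1 - t^2*s) / (1 - t*s)^2 := by
      rw [hΨval, hnorm1, hnorm2, norm_div, norm_mul, norm_pow, Complex.norm_real,
        Complex.norm_real, Real.norm_eq_abs, Real.norm_eq_abs, abs_of_pos ht2s, abs_of_pos htspos]
    have hΨ0norm : ‖Ψ 0‖ = B * (1-t) / (1 - t*s) := by
      have h1 : Ψ 0 = (((1-t:ℝ)):ℂ) * d0 / (((1 - t*s:ℝ)):ℂ) := by
        rw [hΨdef]
        simp only
        rw [← hd0def, hcb, mul_assoc, hσ, hbdef]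
        push_cast
        ring_nf
      rw [h1, norm_div, norm_mul, Complex.norm_real, Complex.norm_real, Real.norm_eq_abs,
        Real.norm_eq_abs, abs_of_pos (by linarith : (0:ℝ) < 1 - t), abs_of_pos htspos, ← hBdef]
      ring
    rw [hderivnorm, hΨ0norm] at hderivle
    rw [div_le_iff₀ (pow_pos htspos 2)] at hderivle
    have hexp : (1 + B * (1 - t) / (1 - t*s)) * (1 - t*s)^2
        = (1 - t*s)^2 + B*((1-t)*(1-t*s)) := by
      field_simp
    rw [hexp] at hderivle
    exact hderivle
  -- limit t → 1⁻ : ‖d1‖ ≤ 1 - s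
  set A : ℝ := ‖d1‖ with hAdef
  have hA0 : 0 ≤ A := norm_nonneg d1
  have hNB : (𝓝[Ioo (0:ℝ) 1] (1:ℝ)).NeBot := right_nhdsWithin_Ioo_neBot zero_lt_one
  have hd1le : A ≤ 1 - s := by
    by_cases hcase : s < 1
    · have lim1 : Tendsto (fun t:ℝ => A * (1 - t^2*s)) (𝓝[Ioo (0:ℝ) 1] 1) (𝓝 (A*(1-s))) :=
        (((continuous_const.mul (continuous_const.sub ((continuous_pow 2).mul continuous_const)) : Continuous (fun t:ℝ => A * (1 - t^2*s))).tendsto' 1 _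
          (by show A * (1 - 1^2*s) = A*(1-s); ring))).mono_left nhdsWithin_le_nhds
      have lim2 : Tendsto (fun t:ℝ => (1 - t*s)^2 + B*((1-t)*(1-t*s))) (𝓝[Ioo (0:ℝ) 1] 1)
          (𝓝 ((1-s)^2)) :=
        ((((((continuous_const.sub (continuous_id.mul continuous_const)).pow 2).add (continuous_const.mul ((continuous_const.sub continuous_id).mul (continuous_const.sub (continuous_id.mul continuous_const))))) : Continuous fun t:ℝ => (1 - t*s)^2 + B*((1-t)*(1-t*s))).tendsto' 1 _
          (by show (1 - 1*s)^2 + B*((1-1)*(1-1*s)) = (1-s)^2; ring))).mono_left nhdsWithin_le_nhds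
      have hle : A*(1-s) ≤ (1-s)^2 :=
        le_of_tendsto_of_tendsto lim1 lim2 (eventually_mem_nhdsWithin.mono fun t ht => key t ht)
      nlinarith
    · have hseq : s = 1 := le_antisymm hs1 (not_lt.mp hcase)
      have key2 : ∀ t ∈ Ioo (0:ℝ) 1, A * (1+t) ≤ 2*(1-t) := by
        intro t ht
        have h := key t ht
        rw [hseq] at h
        have h1t : (0:ℝ) < 1 - t := by linarith [ht.2]
        have h3 : A*(1+t)*(1-t) ≤ 2*(1-t)*(1-t) := by nlinarith [ht.1, ht.2]
        exact (mul_le_mul_iff_of_pos_right h1t).mp h3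
      have lim1 : Tendsto (fun t:ℝ => A*(1+t)) (𝓝[Ioo (0:ℝ) 1] 1) (𝓝 (A*2)) :=
        (((continuous_const.mul (continuous_const.add continuous_id) : Continuous fun t:ℝ => A*(1+t)).tendsto' 1 _
          (by show A*(1+1) = A*2; ring))).mono_left nhdsWithin_le_nhds
      have lim2 : Tendsto (fun t:ℝ => 2*(1-t)) (𝓝[Ioo (0:ℝ) 1] 1) (𝓝 0) :=
        (((continuous_const.mul (continuous_const.sub continuous_id) : Continuous fun t:ℝ => 2*(1-t)).tendsto' 1 _
          (by norm_num))).mono_left nhdsWithin_le_nhds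
      have h20 : A*2 ≤ 0 :=
        le_of_tendsto_of_tendsto lim1 lim2 (eventually_mem_nhdsWithin.mono fun t ht => key2 t ht)
      rw [hseq]
      linarith
  -- final assembly
  have hit2 : iteratedDeriv 2 f 0 = D2 0 := by
    rw [iteratedDeriv_succ, iteratedDeriv_one, hD2, hD]
  have hit3 : iteratedDeriv 3 f 0 = D3 0 := by
    rw [iteratedDeriv_succ, iteratedDeriv_succ, iteratedDeriv_one, hD3, hD2, hD]
  have hXeq : ∀ μ : ℂ, iteratedDeriv 3 f 0 / 6 - μ * (iteratedDeriv 2 f 0 / 2)^2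
      = (d1 - μ*d0^2)/4 := by
    intro μ
    rw [hit3, hit2, ← hd0val]
    have h3 : D3 0 = 3*d1/2 := by
      linear_combination (-3/2 : ℂ) * hd1val
    rw [h3]
    ring
  have final : ∀ μ : ℂ, ‖iteratedDeriv 3 f 0 / 6 - μ * (iteratedDeriv 2 f 0 / 2) ^ 2‖ ≤
      (1 / 4) * max 1 ‖μ‖ := by
    intro μ
    rw [hXeq μ]
    have hμ0 : 0 ≤ ‖μ‖ := norm_nonneg μ
    have h1 : ‖(d1 - μ*d0^2)/4‖ = ‖d1 - μ*d0^2‖/4 := by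
      rw [norm_div]
      norm_num
    have h2 : ‖d1 - μ*d0^2‖ ≤ A + ‖μ‖*s := by
      calc ‖d1 - μ*d0^2‖ ≤ ‖d1‖ + ‖μ*d0^2‖ := norm_sub_le _ _
      _ = A + ‖μ‖*s := by rw [norm_mul, norm_pow, ← hBdef, hsB, hAdef]
    rw [h1]
    rcases le_total ‖μ‖ 1 with hμ | hμ
    · rw [max_eq_left hμ]
      nlinarith
    · rw [max_eq_right hμ]
      nlinarith
  exact final
end

section
/- Let f ∈ Ω with inverse function f^{-1}(w) = w + Σ_{n≥2} b_n w^n near 0. Then |b₂| ≤ 1/2, |b₃| ≤ 1/2, and |b₄| ≤ 19/24. -/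
open Metric

private lemma aux_mobius (c w : ℂ) (hc : ‖c‖ ≤ 1) (hw : ‖w‖ ≤ 1) :
    ‖w - c‖ ≤ ‖1 - (starRingEnd ℂ) c * w‖ := by
  have h1 : Complex.normSq (1 - (starRingEnd ℂ) c * w) - Complex.normSq (w - c)
      = (1 - Complex.normSq c) * (1 - Complex.normSq w) := by
    simp only [Complex.normSq_apply, Complex.sub_re, Complex.sub_im, Complex.mul_re,
      Complex.mul_im, Complex.one_re, Complex.one_im, Complex.conj_re, Complex.conj_im]
    ring
  have hec : Complex.normSq c = ‖c‖ ^ 2 := by rw [← Complex.sq_norm]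
  have hew : Complex.normSq w = ‖w‖ ^ 2 := by rw [← Complex.sq_norm]
  have h2 : Complex.normSq (w - c) ≤ Complex.normSq (1 - (starRingEnd ℂ) c * w) := by
    have h3 : 0 ≤ (1 - Complex.normSq c) * (1 - Complex.normSq w) :=
      mul_nonneg (by nlinarith [norm_nonneg c]) (by nlinarith [norm_nonneg w])
    linarith
  rw [Complex.norm_def, Complex.norm_def]
  exact Real.sqrt_le_sqrt h2

private lemma aux_sp {φ : ℂ → ℂ} (hd : DifferentiableOn ℂ φ (ball 0 1))
    (hb : ∀ z ∈ ball (0:ℂ) 1, ‖φ z‖ ≤ 1) : ‖deriv φ 0‖ ≤ 1 - ‖φ 0‖ ^ 2 := by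
  have h01 : (0:ℂ) ∈ ball (0:ℂ) 1 := mem_ball_self one_pos
  have hc1 : ‖φ 0‖ ≤ 1 := hb 0 h01
  rcases lt_or_eq_of_le hc1 with hlt | heq
  · -- ‖φ 0‖ < 1, Möbius trick
    set c : ℂ := φ 0 with hc
    have hdφ : DifferentiableAt ℂ φ 0 := hd.differentiableAt (isOpen_ball.mem_nhds h01)
    set d : ℂ := deriv φ 0 with hdd
    have hD0 : (1 : ℂ) - (starRingEnd ℂ) c * c ≠ 0 := by
      intro h
      rw [sub_eq_zero] at h
      have h1 : ‖(starRingEnd ℂ) c * c‖ < 1 := by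
        rw [norm_mul, RCLike.norm_conj]
        nlinarith [norm_nonneg c]
      rw [← h] at h1
      simp at h1
    have hden : ∀ z ∈ ball (0:ℂ) 1, (1:ℂ) - (starRingEnd ℂ) c * φ z ≠ 0 := by
      intro z hz h
      rw [sub_eq_zero] at h
      have h1 : ‖(starRingEnd ℂ) c * φ z‖ < 1 := by
        rw [norm_mul, RCLike.norm_conj]
        nlinarith [norm_nonneg (φ z), norm_nonneg c, hb z hz]
      rw [← h] at h1
      simp at h1
    set σ : ℂ → ℂ := fun z => (φ z - c) / (1 - (starRingEnd ℂ) c * φ z) with hσ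
    have hσd : DifferentiableOn ℂ σ (ball 0 1) := by
      apply DifferentiableOn.div (hd.sub_const c)
        ((differentiableOn_const _).sub (hd.const_mul _)) hden
    have hσ0 : σ 0 = 0 := by simp [hσ, ← hc]
    have hσb : ∀ z ∈ ball (0:ℂ) 1, ‖σ z‖ ≤ 1 := by
      intro z hz
      rw [hσ]
      simp only [norm_div]
      have hpos : 0 < ‖(1:ℂ) - (starRingEnd ℂ) c * φ z‖ :=
        norm_pos_iff.2 (hden z hz)
      rw [div_le_one hpos]
      exact aux_mobius c (φ z) hc1 (hb z hz)
    have hds : ‖deriv σ 0‖ ≤ 1 := by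
      refine le_of_forall_pos_le_add fun ε hε => ?_
      have hmaps : Set.MapsTo σ (ball 0 1) (ball (σ 0) (1 + ε)) := fun w hw => by
        rw [Metric.mem_ball, dist_eq_norm, hσ0, sub_zero]
        exact lt_of_le_of_lt (hσb w hw) (by linarith)
      have h := Complex.norm_dslope_le_div_of_mapsTo_ball hσd (hmaps.mono_right ball_subset_closedBall) h01
      rwa [dslope_same, div_one] at h
    have hN : HasDerivAt (fun z => φ z - c) d 0 := hdφ.hasDerivAt.sub_const c
    have hD : HasDerivAt (fun z => (1:ℂ) - (starRingEnd ℂ) c * φ z)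
        (-((starRingEnd ℂ) c * d)) 0 := by
      have := (hdφ.hasDerivAt.const_mul ((starRingEnd ℂ) c)).const_sub (1:ℂ)
      exact this
    have hder : HasDerivAt σ
        ((d * (1 - (starRingEnd ℂ) c * c) - (c - c) * (-((starRingEnd ℂ) c * d))) /
          (1 - (starRingEnd ℂ) c * c) ^ 2) 0 := hN.div hD hD0
    have hval : deriv σ 0 = d / (1 - (starRingEnd ℂ) c * c) := by
      rw [hder.deriv]
      field_simp
      ring
    have hdecomp : d = deriv σ 0 * (1 - (starRingEnd ℂ) c * c) := by
      rw [hval, div_mul_cancel₀ _ hD0]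
    have hnorm : ‖(1:ℂ) - (starRingEnd ℂ) c * c‖ = 1 - ‖c‖ ^ 2 := by
      have e1 : (starRingEnd ℂ) c * c = ((‖c‖ ^ 2 : ℝ) : ℂ) := by
        rw [mul_comm, Complex.mul_conj]
        norm_cast
        rw [← Complex.sq_norm]
      rw [e1, show (1:ℂ) - ((‖c‖ ^ 2 : ℝ) : ℂ) = (((1 - ‖c‖ ^ 2 : ℝ)) : ℂ) by push_cast; ring,
        Complex.norm_real, Real.norm_eq_abs, abs_of_nonneg (by nlinarith [norm_nonneg c])]
    calc ‖d‖ = ‖deriv σ 0‖ * ‖(1:ℂ) - (starRingEnd ℂ) c * c‖ := by rw [hdecomp, norm_mul]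
      _ ≤ 1 * (1 - ‖c‖ ^ 2) := by
          rw [hnorm]
          exact mul_le_mul_of_nonneg_right hds (by nlinarith [norm_nonneg c])
      _ = 1 - ‖c‖ ^ 2 := one_mul _
  · -- ‖φ 0‖ = 1 : maximum modulus, φ constant
    have hmax : IsMaxOn (norm ∘ φ) (ball (0:ℂ) 1) 0 := fun z hz => by
      simp only [Function.comp_apply, Set.mem_setOf_eq, heq]
      exact hb z hz
    have hEq := Complex.eqOn_of_isPreconnected_of_isMaxOn_norm
      (convex_ball (0:ℂ) 1).isPreconnected isOpen_ball hd h01 hmax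
    have hev : φ =ᶠ[nhds (0:ℂ)] fun _ => φ 0 :=
      Filter.eventuallyEq_of_mem (isOpen_ball.mem_nhds h01) hEq
    rw [hev.deriv_eq, deriv_const, norm_zero, heq]
    norm_num

private lemma aux_dslope_bound {f : ℂ → ℂ} {c : ℝ} (hd : DifferentiableOn ℂ f (ball 0 1))
    (hb : ∀ z ∈ ball (0:ℂ) 1, ‖f z - f 0‖ ≤ c) {z : ℂ} (hz : z ∈ ball (0:ℂ) 1) :
    ‖dslope f 0 z‖ ≤ c := by
  refine le_of_forall_pos_le_add fun ε hε => ?_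
  have hmaps : Set.MapsTo f (ball 0 1) (ball (f 0) (c + ε)) := fun w hw => by
    rw [Metric.mem_ball, dist_eq_norm]
    exact lt_of_le_of_lt (hb w hw) (by linarith)
  have := Complex.norm_dslope_le_div_of_mapsTo_ball hd (hmaps.mono_right ball_subset_closedBall) hz
  rwa [div_one] at this

private lemma aux_coeff {g : ℂ → ℂ} {q : FormalMultilinearSeries ℂ ℂ ℂ} {r : ENNReal}
    (hq : HasFPowerSeriesOnBall g q 0 r) (n : ℕ) :
    (Nat.factorial n : ℂ) * q.coeff n = iteratedDeriv n g 0 := by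
  have h := hq.factorial_smul (1 : ℂ) n
  rw [iteratedDeriv_eq_iteratedFDeriv, ← h]
  rw [nsmul_eq_mul]
  rfl

private lemma aux_cauchy {g : ℂ → ℂ} (hd : DifferentiableOn ℂ g (ball 0 1))
    (hb : ∀ z ∈ ball (0:ℂ) 1, ‖g z‖ ≤ 2⁻¹) (n : ℕ) :
    ‖iteratedDeriv n g 0‖ ≤ (Nat.factorial n : ℝ) * 2⁻¹ := by
  have key : ∀ r : ℝ, r ∈ Set.Ioo (0:ℝ) 1 →
      ‖iteratedDeriv n g 0‖ * r ^ n ≤ (Nat.factorial n : ℝ) * 2⁻¹ := by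
    intro r hr
    lift r to NNReal using hr.1.le with R hR
    have hR0 : 0 < R := by exact_mod_cast hr.1
    have hR1 : (R : ℝ) < 1 := hr.2
    have hsub : closedBall (0:ℂ) R ⊆ ball (0:ℂ) 1 := closedBall_subset_ball hR1
    have hq : HasFPowerSeriesOnBall g (cauchyPowerSeries g 0 R) 0 R :=
      (hd.mono hsub).hasFPowerSeriesOnBall hR0
    set q := cauchyPowerSeries g 0 (R : ℝ) with hqdef
    -- bound the integral
    have hmem : ∀ θ : ℝ, circleMap 0 (R : ℝ) θ ∈ ball (0:ℂ) 1 := by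
      intro θ
      rw [mem_ball_zero_iff, norm_circleMap_zero,
        abs_of_nonneg R.coe_nonneg]
      exact hR1
    have hcont : Continuous fun θ : ℝ => ‖g (circleMap 0 (R : ℝ) θ)‖ :=
      ((hd.continuousOn).comp_continuous (continuous_circleMap 0 _) hmem).norm
    have hint : (∫ θ : ℝ in (0:ℝ)..2 * Real.pi, ‖g (circleMap 0 (R : ℝ) θ)‖) ≤ Real.pi := by
      have h1 : (∫ θ : ℝ in (0:ℝ)..2 * Real.pi, ‖g (circleMap 0 (R : ℝ) θ)‖) ≤
          ∫ _ : ℝ in (0:ℝ)..2 * Real.pi, (2⁻¹ : ℝ) := by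
        apply intervalIntegral.integral_mono_on Real.two_pi_pos.le
          (hcont.intervalIntegrable _ _) intervalIntegrable_const
        exact fun θ _ => hb _ (hmem θ)
      rw [intervalIntegral.integral_const, smul_eq_mul] at h1
      linarith [h1]
    have hcoe : ‖q n‖ ≤ 2⁻¹ * ((R : ℝ)⁻¹) ^ n := by
      have h0 := norm_cauchyPowerSeries_le g 0 (R : ℝ) n
      rw [abs_of_nonneg R.coe_nonneg] at h0
      refine h0.trans ?_
      apply mul_le_mul_of_nonneg_right _ (by positivity)
      calc (2 * Real.pi)⁻¹ * ∫ θ : ℝ in (0:ℝ)..2 * Real.pi, ‖g (circleMap 0 (R : ℝ) θ)‖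
          ≤ (2 * Real.pi)⁻¹ * Real.pi := by
            apply mul_le_mul_of_nonneg_left hint (by positivity)
        _ = 2⁻¹ := by
            field_simp
    have hfc : (Nat.factorial n : ℂ) * q.coeff n = iteratedDeriv n g 0 := aux_coeff hq n
    have hnorm : ‖iteratedDeriv n g 0‖ = (Nat.factorial n : ℝ) * ‖q n‖ := by
      rw [← hfc, norm_mul, FormalMultilinearSeries.norm_apply_eq_norm_coef]
      norm_num
    rw [hnorm]
    have h2 : ‖q n‖ * (R : ℝ) ^ n ≤ 2⁻¹ := by
      have := mul_le_mul_of_nonneg_right hcoe (pow_nonneg R.coe_nonneg n)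
      calc ‖q n‖ * (R : ℝ) ^ n ≤ 2⁻¹ * ((R:ℝ)⁻¹) ^ n * (R : ℝ) ^ n := this
        _ = 2⁻¹ := by
            rw [mul_assoc, ← mul_pow, inv_mul_cancel₀ (ne_of_gt (by exact_mod_cast hR0)),
              one_pow, mul_one]
    calc (Nat.factorial n : ℝ) * ‖q n‖ * (R : ℝ) ^ n
        = (Nat.factorial n : ℝ) * (‖q n‖ * (R : ℝ) ^ n) := by ring
      _ ≤ (Nat.factorial n : ℝ) * 2⁻¹ := by
          apply mul_le_mul_of_nonneg_left h2 (by positivity)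
  have hlim : Filter.Tendsto (fun r : ℝ => ‖iteratedDeriv n g 0‖ * r ^ n)
      (nhdsWithin 1 (Set.Iio 1)) (nhds (‖iteratedDeriv n g 0‖ * 1 ^ n)) :=
    (Filter.Tendsto.mul tendsto_const_nhds ((continuous_pow n).tendsto 1)).mono_left
      nhdsWithin_le_nhds
  have hev : ∀ᶠ r in nhdsWithin (1:ℝ) (Set.Iio 1),
      ‖iteratedDeriv n g 0‖ * r ^ n ≤ (Nat.factorial n : ℝ) * 2⁻¹ := by
    filter_upwards [Ioo_mem_nhdsLT_of_mem (Set.mem_Ioc.2 ⟨one_pos, le_refl (1:ℝ)⟩)]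
      with r hr using key r hr
  have := le_of_tendsto hlim hev
  simpa using this

theorem stmt_15 (f : ℂ → ℂ) (hf : AnalyticOnNhd ℂ f (ball 0 1))
    (hf0 : f 0 = 0) (hf1 : deriv f 0 = 1)
    (hΩ : ∀ z ∈ ball (0 : ℂ) 1, ‖z * deriv f z - f z‖ < 1 / 2)
    (a₂ a₃ a₄ : ℂ)
    (ha₂ : a₂ = iteratedDeriv 2 f 0 / 2)
    (ha₃ : a₃ = iteratedDeriv 3 f 0 / 6)
    (ha₄ : a₄ = iteratedDeriv 4 f 0 / 24) :
    ‖-a₂‖ ≤ 1 / 2 ∧ ‖2 * a₂ ^ 2 - a₃‖ ≤ 1 / 2 ∧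
      ‖-(5 * a₂ ^ 3 - 5 * a₂ * a₃ + a₄)‖ ≤ 19 / 24 := by
  have hB0 : (0:ℂ) ∈ ball (0:ℂ) 1 := mem_ball_self one_pos
  have hBn : ball (0:ℂ) 1 ∈ nhds (0:ℂ) := isOpen_ball.mem_nhds hB0
  -- iterated derivatives of f are analytic on the ball
  have hu : ∀ k : ℕ, AnalyticOnNhd ℂ (iteratedDeriv k f) (ball (0:ℂ) 1) := by
    intro k
    rw [iteratedDeriv_eq_iterate]
    exact hf.iterated_deriv k
  set g : ℂ → ℂ := fun z => z * deriv f z - f z with hgdef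
  have hg_diff : DifferentiableOn ℂ g (ball (0:ℂ) 1) :=
    (differentiableOn_id.mul (hf.deriv.differentiableOn)).sub hf.differentiableOn
  have hg0 : g 0 = 0 := by simp [hgdef, hf0]
  have hgb : ∀ z ∈ ball (0:ℂ) 1, ‖g z‖ ≤ 2⁻¹ := by
    intro z hz
    have := (hΩ z hz).le
    rw [hgdef]
    simpa [one_div] using this
  -- pointwise derivative facts
  have hAt : ∀ (k : ℕ), ∀ z ∈ ball (0:ℂ) 1,
      HasDerivAt (iteratedDeriv k f) (iteratedDeriv (k + 1) f z) z := by
    intro k z hz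
    have h := ((hu k z hz).differentiableAt).hasDerivAt
    rw [show iteratedDeriv (k + 1) f = deriv (iteratedDeriv k f) from iteratedDeriv_succ]
    exact h
  have hmul : ∀ (k : ℕ), ∀ z ∈ ball (0:ℂ) 1,
      HasDerivAt (fun w => w * iteratedDeriv k f w)
        (iteratedDeriv k f z + z * iteratedDeriv (k + 1) f z) z := by
    intro k z hz
    have h := (hasDerivAt_id z).mul (hAt k z hz)
    simpa [Pi.mul_def] using h
  have hDg : ∀ z ∈ ball (0:ℂ) 1, HasDerivAt g (z * iteratedDeriv 2 f z) z := by
    intro z hz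
    have h1 : HasDerivAt f (deriv f z) z := ((hf z hz).differentiableAt).hasDerivAt
    have h2 : HasDerivAt (deriv f) (iteratedDeriv 2 f z) z := by
      have h := hAt 1 z hz
      rw [iteratedDeriv_one] at h
      exact h
    have h := ((hasDerivAt_id z).mul h2).sub h1
    have hval : id z * iteratedDeriv 2 f z + 1 * deriv f z - deriv f z
        = z * iteratedDeriv 2 f z := by simp
    have h' := ((hasDerivAt_id z).mul h2).sub h1
    simpa [Pi.mul_def, Pi.sub_def] using h'
  have E1 : ∀ z ∈ ball (0:ℂ) 1, deriv g z = z * iteratedDeriv 2 f z :=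
    fun z hz => (hDg z hz).deriv
  have E2 : ∀ z ∈ ball (0:ℂ) 1,
      deriv (deriv g) z = iteratedDeriv 2 f z + z * iteratedDeriv 3 f z := by
    intro z hz
    have hev : deriv g =ᶠ[nhds z] fun w => w * iteratedDeriv 2 f w := by
      filter_upwards [isOpen_ball.mem_nhds hz] with w hw using E1 w hw
    rw [hev.deriv_eq]
    exact (hmul 2 z hz).deriv
  have E3 : ∀ z ∈ ball (0:ℂ) 1,
      deriv (deriv (deriv g)) z = 2 * iteratedDeriv 3 f z + z * iteratedDeriv 4 f z := by
    intro z hz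
    have hev : deriv (deriv g) =ᶠ[nhds z]
        fun w => iteratedDeriv 2 f w + w * iteratedDeriv 3 f w := by
      filter_upwards [isOpen_ball.mem_nhds hz] with w hw using E2 w hw
    rw [hev.deriv_eq, ((hAt 2 z hz).fun_add (hmul 3 z hz)).deriv]
    ring
  have E4 : deriv (deriv (deriv (deriv g))) 0 = 3 * iteratedDeriv 4 f 0 := by
    have hev : deriv (deriv (deriv g)) =ᶠ[nhds (0:ℂ)]
        fun w => 2 * iteratedDeriv 3 f w + w * iteratedDeriv 4 f w := by
      filter_upwards [hBn] with w hw using E3 w hw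
    rw [hev.deriv_eq, (((hAt 3 0 hB0).const_mul (2:ℂ)).fun_add (hmul 4 0 hB0)).deriv]
    ring
  -- iterated derivatives of g at 0
  have hg2 : iteratedDeriv 2 g 0 = iteratedDeriv 2 f 0 := by
    have e : iteratedDeriv 2 g = deriv (deriv g) := by
      rw [iteratedDeriv_succ, iteratedDeriv_one]
    rw [e, E2 0 hB0]
    simp
  have hg3 : iteratedDeriv 3 g 0 = 2 * iteratedDeriv 3 f 0 := by
    have e : iteratedDeriv 3 g = deriv (deriv (deriv g)) := by
      rw [iteratedDeriv_succ, iteratedDeriv_succ, iteratedDeriv_one]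
    rw [e, E3 0 hB0]
    simp
  have hg4 : iteratedDeriv 4 g 0 = 3 * iteratedDeriv 4 f 0 := by
    have e : iteratedDeriv 4 g = deriv (deriv (deriv (deriv g))) := by
      rw [iteratedDeriv_succ, iteratedDeriv_succ, iteratedDeriv_succ, iteratedDeriv_one]
    rw [e, E4]
  -- power series of g at 0 with radius 1/2
  have hhalf : ((1/2 : NNReal) : ℝ) < 1 := by norm_num
  have hq : HasFPowerSeriesOnBall g (cauchyPowerSeries g 0 ((1/2 : NNReal) : ℝ)) 0
      (1/2 : NNReal) :=
    (hg_diff.mono (closedBall_subset_ball hhalf)).hasFPowerSeriesOnBall (by norm_num)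
  set q := cauchyPowerSeries g 0 ((1/2 : NNReal) : ℝ) with hqdef
  have hc2 : q.coeff 2 = a₂ := by
    have h := aux_coeff hq 2
    rw [hg2] at h
    have h2 : (Nat.factorial 2 : ℂ) = 2 := by norm_num [Nat.factorial]
    rw [h2] at h
    rw [ha₂]
    linear_combination (1/2 : ℂ) * h
  have hc3 : q.coeff 3 = 2 * a₃ := by
    have h := aux_coeff hq 3
    rw [hg3] at h
    have h6 : (Nat.factorial 3 : ℂ) = 6 := by norm_num [Nat.factorial]
    rw [h6] at h
    rw [ha₃]
    linear_combination (1/6 : ℂ) * h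
  -- the function φ = dslope (dslope g 0) 0
  set g1 : ℂ → ℂ := dslope g 0 with hg1def
  set φ : ℂ → ℂ := dslope g1 0 with hφdef
  have hφat : HasFPowerSeriesAt φ q.fslope.fslope 0 :=
    (hq.hasFPowerSeriesAt.has_fpower_series_dslope_fslope).has_fpower_series_dslope_fslope
  have hφ0 : φ 0 = a₂ := by
    have h := hφat.coeff_zero (fun _ => 1)
    have h' : (q.fslope.fslope).coeff 0 = φ 0 := h
    rw [FormalMultilinearSeries.coeff_fslope, FormalMultilinearSeries.coeff_fslope] at h'
    rw [← h', hc2]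
  have hφ1 : deriv φ 0 = 2 * a₃ := by
    have h := hφat.deriv
    have h' : deriv φ 0 = (q.fslope.fslope).coeff 1 := h
    rw [FormalMultilinearSeries.coeff_fslope, FormalMultilinearSeries.coeff_fslope] at h'
    rw [h', hc3]
  -- bounds on g1 and φ
  have hg1_diff : DifferentiableOn ℂ g1 (ball (0:ℂ) 1) :=
    (Complex.differentiableOn_dslope hBn).mpr hg_diff
  have hg1b : ∀ z ∈ ball (0:ℂ) 1, ‖g1 z‖ ≤ 2⁻¹ := by
    intro z hz
    apply aux_dslope_bound hg_diff _ hz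
    intro w hw
    rw [hg0, sub_zero]
    exact hgb w hw
  have hg10 : g1 0 = 0 := by
    rw [hg1def, dslope_same, E1 0 hB0]
    simp
  have hφ_diff : DifferentiableOn ℂ φ (ball (0:ℂ) 1) :=
    (Complex.differentiableOn_dslope hBn).mpr hg1_diff
  have hφb : ∀ z ∈ ball (0:ℂ) 1, ‖φ z‖ ≤ 2⁻¹ := by
    intro z hz
    apply aux_dslope_bound hg1_diff _ hz
    intro w hw
    rw [hg10, sub_zero]
    exact hg1b w hw
  -- bound on a₂
  have ht : ‖a₂‖ ≤ 1/2 := by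
    rw [← hφ0]
    simpa [one_div] using hφb 0 hB0
  -- Schwarz-Pick for a₃
  have ha3b : 4 * ‖a₃‖ ≤ 1 - 4 * ‖a₂‖ ^ 2 := by
    have hψd : DifferentiableOn ℂ (fun z => 2 * φ z) (ball (0:ℂ) 1) := hφ_diff.const_mul 2
    have hψb : ∀ z ∈ ball (0:ℂ) 1, ‖(fun z => 2 * φ z) z‖ ≤ 1 := by
      intro z hz
      simp only [norm_mul, Complex.norm_ofNat]
      have := hφb z hz
      linarith
    have h := aux_sp hψd hψb
    have hder : deriv (fun z => 2 * φ z) 0 = 2 * deriv φ 0 :=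
      deriv_const_mul 2 (hφ_diff.differentiableAt hBn)
    rw [hder, hφ1] at h
    simp only [norm_mul, Complex.norm_ofNat, hφ0] at h
    nlinarith [norm_nonneg a₂, norm_nonneg a₃, h]
  -- Cauchy bound for a₄
  have ha4b : ‖a₄‖ ≤ 1/6 := by
    have h := aux_cauchy hg_diff hgb 4
    rw [hg4] at h
    have h24 : iteratedDeriv 4 f 0 = 24 * a₄ := by
      rw [ha₄]; field_simp
    rw [h24] at h
    have : ‖(3:ℂ) * (24 * a₄)‖ = 72 * ‖a₄‖ := by
      rw [norm_mul, norm_mul, Complex.norm_ofNat, Complex.norm_ofNat]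
      ring
    rw [this] at h
    have h12 : (Nat.factorial 4 : ℝ) * 2⁻¹ = 12 := by norm_num [Nat.factorial]
    rw [h12] at h
    linarith
  -- conclude
  refine ⟨?_, ?_, ?_⟩
  · rw [norm_neg]
    exact ht
  · have h1 : ‖2 * a₂ ^ 2 - a₃‖ ≤ 2 * ‖a₂‖ ^ 2 + ‖a₃‖ := by
      refine (norm_sub_le _ _).trans ?_
      rw [norm_mul, norm_pow, Complex.norm_ofNat]
    nlinarith [norm_nonneg a₂, norm_nonneg a₃]
  · rw [norm_neg]
    have h1 : ‖5 * a₂ ^ 3 - 5 * a₂ * a₃ + a₄‖ ≤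
        5 * ‖a₂‖ ^ 3 + 5 * ‖a₂‖ * ‖a₃‖ + ‖a₄‖ := by
      refine (norm_add_le _ _).trans ?_
      apply add_le_add_left
      refine (norm_sub_le _ _).trans ?_
      apply add_le_add
      · rw [norm_mul, norm_pow, Complex.norm_ofNat]
      · rw [norm_mul, norm_mul, Complex.norm_ofNat]
    nlinarith [norm_nonneg a₂, norm_nonneg a₃, norm_nonneg a₄,
      mul_le_mul_of_nonneg_left ha3b (mul_nonneg (by norm_num : (0:ℝ) ≤ 5/4) (norm_nonneg a₂)),
      sq_nonneg (‖a₂‖)]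
end

section
/- Let f(z) = z + Σ_{n≥2} a_n z^n belong to Ω. Then for every n ≥ 2, |T₂(n)| = |a_n² - a_{n+1}²| ≤ 1/(4(n-1)²) + 1/(4n²). -/
open Metric

/-- iterated derivatives of an analytic function are analytic -/
lemma aux_analyticOnNhd_iteratedDeriv {f : ℂ → ℂ} {s : Set ℂ}
    (hf : AnalyticOnNhd ℂ f s) (n : ℕ) : AnalyticOnNhd ℂ (iteratedDeriv n f) s := by
  induction n with
  | zero => simpa using hf
  | succ n ih => rw [iteratedDeriv_succ]; exact ih.deriv

lemma aux_claim {f : ℂ → ℂ} (hf : AnalyticOnNhd ℂ f (ball 0 1)) (n : ℕ) :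
    ∀ z ∈ ball (0 : ℂ) 1,
      iteratedDeriv (n + 1) (fun w => w * deriv f w - f w) z =
        z * iteratedDeriv (n + 2) f z + (n : ℂ) * iteratedDeriv (n + 1) f z := by
  induction n with
  | zero =>
    intro z hz
    have h1 : HasDerivAt f (deriv f z) z := (hf z hz).differentiableAt.hasDerivAt
    have h2 : HasDerivAt (deriv f) (iteratedDeriv 2 f z) z := by
      have := (hf.deriv z hz).differentiableAt.hasDerivAt
      rwa [show iteratedDeriv 2 f = deriv (deriv f) by
        rw [iteratedDeriv_succ, iteratedDeriv_one]] 
    have h3 : HasDerivAt (fun w => w * deriv f w - f w)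
        ((1 * deriv f z + z * iteratedDeriv 2 f z) - deriv f z) z :=
      ((hasDerivAt_id z).mul h2).sub h1
    rw [iteratedDeriv_one]
    rw [h3.deriv]
    push_cast
    ring
  | succ n ih =>
    intro z hz
    have heq : iteratedDeriv (n + 1) (fun w => w * deriv f w - f w) =ᶠ[nhds z]
        (fun w => w * iteratedDeriv (n + 2) f w + (n : ℂ) * iteratedDeriv (n + 1) f w) := by
      filter_upwards [isOpen_ball.mem_nhds hz] with w hw using ih w hw
    have hF : HasDerivAt (iteratedDeriv (n + 2) f) (iteratedDeriv (n + 3) f z) z := by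
      have := ((aux_analyticOnNhd_iteratedDeriv hf (n+2)) z hz).differentiableAt.hasDerivAt
      rwa [show iteratedDeriv (n + 3) f = deriv (iteratedDeriv (n + 2) f) from
        iteratedDeriv_succ]
    have hG : HasDerivAt (iteratedDeriv (n + 1) f) (iteratedDeriv (n + 2) f z) z := by
      have := ((aux_analyticOnNhd_iteratedDeriv hf (n+1)) z hz).differentiableAt.hasDerivAt
      rwa [show iteratedDeriv (n + 2) f = deriv (iteratedDeriv (n + 1) f) from
        iteratedDeriv_succ]
    have h3 : HasDerivAt
        (fun w => w * iteratedDeriv (n + 2) f w + (n : ℂ) * iteratedDeriv (n + 1) f w)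
        ((1 * iteratedDeriv (n + 2) f z + z * iteratedDeriv (n + 3) f z) +
          (n : ℂ) * iteratedDeriv (n + 2) f z) z :=
      ((hasDerivAt_id z).mul hF).add (hG.const_mul _)
    rw [iteratedDeriv_succ, heq.deriv_eq, h3.deriv]
    push_cast
    ring

lemma aux_coeff_bound {g : ℂ → ℂ} (hg : AnalyticOnNhd ℂ g (ball 0 1))
    (hb : ∀ z ∈ ball (0 : ℂ) 1, ‖g z‖ < 1 / 2) (m : ℕ) :
    ‖iteratedDeriv m g 0‖ ≤ (m.factorial : ℝ) / 2 := by
  have key : ∀ r : ℝ, 0 < r → r < 1 → ‖iteratedDeriv m g 0‖ * r ^ m ≤ (m.factorial : ℝ) / 2 := by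
    intro r hr0 hr1
    lift r to NNReal using hr0.le with R hR
    have hR0 : 0 < R := by exact_mod_cast hr0
    have hsub : closedBall (0 : ℂ) R ⊆ ball 0 1 := closedBall_subset_ball hr1
    have hd : DifferentiableOn ℂ g (closedBall (0 : ℂ) R) :=
      (hg.mono hsub).differentiableOn
    have hps := hd.hasFPowerSeriesOnBall hR0
    have hiter : iteratedDeriv m g 0 = (m.factorial : ℂ) •
        cauchyPowerSeries g 0 R m (fun _ => (1 : ℂ)) := by
      rw [iteratedDeriv_eq_iteratedFDeriv, ← hps.factorial_smul (1 : ℂ) m]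
      simp
    have hnorm1 : ‖cauchyPowerSeries g 0 R m (fun _ => (1 : ℂ))‖ ≤
        ‖cauchyPowerSeries g 0 R m‖ := by
      have := (cauchyPowerSeries g 0 R m).le_opNorm (fun _ => (1 : ℂ))
      simpa using this
    -- bound on the power series norm
    have hmem' : ∀ θ : ℝ, circleMap 0 (R : ℝ) θ ∈ ball (0 : ℂ) 1 := by
      intro θ
      rw [mem_ball_zero_iff]
      have hn : ‖circleMap 0 (R : ℝ) θ‖ = |(R : ℝ)| := by
        simpa using abs_circleMap_zero (R : ℝ) θ
      rw [hn, abs_of_nonneg R.coe_nonneg]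
      exact hr1
    have hcont : Continuous fun θ : ℝ => ‖g (circleMap 0 (R : ℝ) θ)‖ := by
      apply Continuous.norm
      exact (hg.continuousOn (s := ball 0 1)).comp_continuous
        (continuous_circleMap 0 R) hmem'
    have hintle : (∫ θ : ℝ in (0 : ℝ)..2 * Real.pi, ‖g (circleMap 0 R θ)‖) ≤
        ∫ _ : ℝ in (0 : ℝ)..2 * Real.pi, (1 / 2 : ℝ) := by
      apply intervalIntegral.integral_mono_on Real.two_pi_pos.le
        (hcont.intervalIntegrable _ _) intervalIntegrable_const
      intro θ _
      exact (hb _ (hmem' θ)).le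
    have hps_norm : ‖cauchyPowerSeries g 0 R m‖ ≤ (1 / 2) * |((R : ℝ))|⁻¹ ^ m := by
      refine (norm_cauchyPowerSeries_le g 0 R m).trans ?_
      refine mul_le_mul_of_nonneg_right ?_ (by positivity)
      rw [intervalIntegral.integral_const] at hintle
      calc (2 * Real.pi)⁻¹ * ∫ θ : ℝ in (0:ℝ)..2 * Real.pi, ‖g (circleMap 0 R θ)‖
          ≤ (2 * Real.pi)⁻¹ * ((2 * Real.pi - 0) • (1 / 2 : ℝ)) := by
            gcongr
        _ = 1 / 2 := by
            simp only [smul_eq_mul]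
            field_simp
            ring
    have habs : |((R : ℝ))| = (R : ℝ) := abs_of_nonneg R.coe_nonneg
    have h0 : ‖iteratedDeriv m g 0‖ ≤ (m.factorial : ℝ) * ((1 / 2) * ((R:ℝ)⁻¹) ^ m) := by
      rw [hiter, norm_smul]
      simp only [Complex.norm_natCast]
      gcongr
      exact hnorm1.trans (by rwa [habs] at hps_norm)
    calc ‖iteratedDeriv m g 0‖ * (R : ℝ) ^ m
        ≤ ((m.factorial : ℝ) * ((1 / 2) * ((R:ℝ)⁻¹) ^ m)) * (R : ℝ) ^ m := by
          gcongr
      _ = (m.factorial : ℝ) / 2 := by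
          rw [inv_pow]
          field_simp
  have htends : Filter.Tendsto (fun r : ℝ => ‖iteratedDeriv m g 0‖ * r ^ m)
      (nhdsWithin 1 (Set.Iio 1)) (nhds (‖iteratedDeriv m g 0‖)) := by
    have : Filter.Tendsto (fun r : ℝ => ‖iteratedDeriv m g 0‖ * r ^ m)
        (nhds 1) (nhds (‖iteratedDeriv m g 0‖ * 1 ^ m)) :=
      (tendsto_const_nhds.mul ((continuous_pow m).tendsto 1))
    simpa using this.mono_left nhdsWithin_le_nhds
  refine le_of_tendsto htends ?_
  filter_upwards [Ioo_mem_nhdsLT_of_mem (show (1:ℝ) ∈ Set.Ioc 0 1 by norm_num)] with r hr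
  exact key r hr.1 hr.2

theorem stmt_16 (f : ℂ → ℂ) (hf : AnalyticOnNhd ℂ f (ball 0 1))
    (hf0 : f 0 = 0) (hf1 : deriv f 0 = 1)
    (hΩ : ∀ z ∈ ball (0 : ℂ) 1, ‖z * deriv f z - f z‖ < 1 / 2) :
    ∀ n : ℕ, 2 ≤ n →
      ‖(iteratedDeriv n f 0 / ((Nat.factorial n : ℕ) : ℂ)) ^ 2 -
        (iteratedDeriv (n + 1) f 0 / ((Nat.factorial (n + 1) : ℕ) : ℂ)) ^ 2‖ ≤
        1 / (4 * ((n : ℝ) - 1) ^ 2) + 1 / (4 * (n : ℝ) ^ 2) := by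
  -- set g
  set g : ℂ → ℂ := fun w => w * deriv f w - f w with hg_def
  have hdf : AnalyticOnNhd ℂ (deriv f) (ball 0 1) := hf.deriv
  have hg : AnalyticOnNhd ℂ g (ball 0 1) := by
    intro z hz
    exact ((analyticAt_id.mul (hdf z hz)).sub (hf z hz))
  -- coefficient bound: for k ≥ 1, ‖iteratedDeriv (k+1) f 0‖ ≤ (k+1)!/(2k)
  have coeff : ∀ k : ℕ, 1 ≤ k →
      ‖iteratedDeriv (k + 1) f 0 / (((k+1).factorial : ℕ) : ℂ)‖ ≤ 1 / (2 * k) := by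
    intro k hk
    have hmem : (0 : ℂ) ∈ ball (0 : ℂ) 1 := by simp
    have hid := aux_claim hf k 0 hmem
    simp only [zero_mul, zero_add] at hid
    have hbd := aux_coeff_bound hg (fun z hz => hΩ z hz) (k + 1)
    rw [hid] at hbd
    rw [norm_mul, Complex.norm_natCast] at hbd
    have hk0 : (0 : ℝ) < k := by exact_mod_cast hk
    rw [norm_div, Complex.norm_natCast]
    rw [div_le_div_iff₀ (by positivity) (by positivity)]
    have hfac : (0 : ℝ) < ((k+1).factorial : ℝ) := by positivity
    nlinarith [norm_nonneg (iteratedDeriv (k + 1) f 0)]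
  intro n hn
  obtain ⟨k, rfl⟩ : ∃ k, n = k + 1 := ⟨n - 1, by omega⟩
  have hk1 : 1 ≤ k := by omega
  have h1 := coeff k hk1
  have h2 := coeff (k + 1) (by omega)
  set a := iteratedDeriv (k + 1) f 0 / (((k+1).factorial : ℕ) : ℂ)
  set b := iteratedDeriv (k + 1 + 1) f 0 / (((k+1+1).factorial : ℕ) : ℂ)
  have hk0 : (0 : ℝ) < k := by exact_mod_cast hk1
  have hcast : ((k + 1 : ℕ) : ℝ) - 1 = (k : ℝ) := by push_cast; ring
  calc ‖a ^ 2 - b ^ 2‖ ≤ ‖a ^ 2‖ + ‖b ^ 2‖ := norm_sub_le _ _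
    _ = ‖a‖ ^ 2 + ‖b‖ ^ 2 := by rw [norm_pow, norm_pow]
    _ ≤ (1 / (2 * k)) ^ 2 + (1 / (2 * ((k : ℝ)+1))) ^ 2 := by
        have hb2 : ‖b‖ ≤ 1 / (2 * ((k : ℝ) + 1)) := by
          convert h2 using 3
          push_cast
          ring
        exact add_le_add (pow_le_pow_left₀ (norm_nonneg a) h1 2)
          (pow_le_pow_left₀ (norm_nonneg b) hb2 2)
    _ = 1 / (4 * (((k+1 : ℕ) : ℝ) - 1) ^ 2) + 1 / (4 * ((k+1 : ℕ) : ℝ) ^ 2) := by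
        rw [hcast]; push_cast; field_simp; ring
end

section
/- Let f(z) = z + a₂z² + a₃z³ + ⋯ belong to Ω. Then |T₃(1)| = |1 - 2a₂² + 2a₃a₂² - a₃²| ≤ 13/8. -/
open Metric Set Filter
open scoped Topology Real NNReal


/-- Cauchy coefficient estimate. -/
lemma coeff_bound {g : ℂ → ℂ} (hg : DifferentiableOn ℂ g (ball 0 1))
    (hb : ∀ z ∈ ball (0:ℂ) 1, ‖g z‖ ≤ 1/2) (n : ℕ) :
    ‖iteratedDeriv n g 0‖ ≤ (n.factorial : ℝ) * (1/2) := by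
  have key : ∀ r : ℝ, 0 < r → r < 1 → ‖iteratedDeriv n g 0‖ ≤ (n.factorial : ℝ) * (1/2) / r ^ n := by
    intro r hr0 hr1
    lift r to ℝ≥0 using hr0.le with R hR
    have hR0 : (0:ℝ) < (R:ℝ) := hr0
    have hRlt : (R : ℝ) < 1 := hr1
    have hd : DifferentiableOn ℂ g (closedBall 0 R) :=
      hg.mono (closedBall_subset_ball (by simpa using hRlt))
    have H := hd.hasFPowerSeriesOnBall (by exact_mod_cast hr0)
    have hfac := H.factorial_smul (1 : ℂ) n
    have hmemball : ∀ θ : ℝ, circleMap 0 (R:ℝ) θ ∈ ball (0:ℂ) 1 := by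
      intro θ
      rw [mem_ball, Complex.dist_eq, sub_zero, norm_circleMap_zero, abs_of_nonneg R.coe_nonneg]
      exact hRlt
    have hcont : Continuous fun θ : ℝ => ‖g (circleMap 0 (R:ℝ) θ)‖ := by
      refine continuous_norm.comp ?_
      refine continuous_iff_continuousAt.2 fun θ => ?_
      exact (hg.differentiableAt (isOpen_ball.mem_nhds (hmemball θ))).continuousAt.comp
        (continuous_circleMap 0 R).continuousAt
    have hint : (∫ θ : ℝ in (0:ℝ)..2 * π, ‖g (circleMap 0 (R:ℝ) θ)‖) ≤ 2 * π * (1/2) := by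
      have h1 : (∫ θ : ℝ in (0:ℝ)..2 * π, ‖g (circleMap 0 (R:ℝ) θ)‖)
          ≤ ∫ _ : ℝ in (0:ℝ)..2 * π, (1/2 : ℝ) :=
        intervalIntegral.integral_mono_on Real.two_pi_pos.le
          (hcont.intervalIntegrable _ _) intervalIntegrable_const
          fun θ _ => hb _ (hmemball θ)
      simpa [mul_comm] using h1
    have h2 : (2 * π)⁻¹ * ∫ θ : ℝ in (0:ℝ)..2 * π, ‖g (circleMap 0 (R:ℝ) θ)‖ ≤ 1/2 := by
      rw [inv_mul_le_iff₀ (by positivity)]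
      exact hint.trans (by ring_nf; exact le_rfl)
    have hnorm : ‖cauchyPowerSeries g 0 (R:ℝ) n‖ ≤ (1/2) / (R:ℝ) ^ n := by
      refine (norm_cauchyPowerSeries_le g 0 R n).trans ?_
      rw [abs_of_nonneg R.coe_nonneg, inv_pow, ← div_eq_mul_inv, div_le_div_iff_of_pos_right]
      · exact h2
      · exact pow_pos hR0 n
    have hle : ‖iteratedDeriv n g 0‖ ≤ (n.factorial : ℝ) * ‖cauchyPowerSeries g 0 (R:ℝ) n‖ := by
      rw [iteratedDeriv_eq_iteratedFDeriv, ← hfac]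
      rw [nsmul_eq_mul, norm_mul, Complex.norm_natCast]
      refine mul_le_mul_of_nonneg_left ?_ (by positivity)
      have := (cauchyPowerSeries g 0 (R:ℝ) n).le_opNorm (fun _ => (1:ℂ))
      simpa using this
    calc ‖iteratedDeriv n g 0‖ ≤ (n.factorial : ℝ) * ‖cauchyPowerSeries g 0 (R:ℝ) n‖ := hle
      _ ≤ (n.factorial : ℝ) * ((1/2) / (R:ℝ) ^ n) :=
          mul_le_mul_of_nonneg_left hnorm (by positivity)
      _ = (n.factorial : ℝ) * (1/2) / (R:ℝ) ^ n := by ring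
  have ht : Tendsto (fun r : ℝ => (n.factorial : ℝ) * (1/2) / r ^ n) (𝓝[<] (1:ℝ))
      (𝓝 ((n.factorial : ℝ) * (1/2))) := by
    have hc : ContinuousAt (fun r : ℝ => (n.factorial : ℝ) * (1/2) / r ^ n) 1 :=
      (continuousAt_const.div (continuousAt_pow _ _) (by norm_num))
    have := hc.tendsto.mono_left (nhdsWithin_le_nhds (s := Iio (1:ℝ)))
    simpa using this
  refine ge_of_tendsto ht ?_
  filter_upwards [Ioo_mem_nhdsLT_of_mem (⟨by norm_num, le_rfl⟩ : (1:ℝ) ∈ Ioc 0 1)] with r hr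
  exact key r hr.1 hr.2

lemma final_ineq (a₂ a₃ : ℂ) (h2 : ‖a₂‖ ≤ 1/2) (h3 : ‖a₃‖ ≤ 1/4) :
    ‖1 - 2 * a₂ ^ 2 + 2 * a₃ * a₂ ^ 2 - a₃ ^ 2‖ ≤ 13 / 8 := by
  have hE : (1 - 2*a₂^2 + 2*a₃*a₂^2 - a₃^2 : ℂ)
      = (1-a₃)*(1+a₃) + (-(2*a₂^2))*(1-a₃) := by ring
  set u := ‖(1:ℂ) - a₃‖ with hu
  set v := ‖(1:ℂ) + a₃‖ with hv
  have huv : u^2 + v^2 = 2 + 2*‖a₃‖^2 := by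
    rw [hu, hv]
    simp only [Complex.sq_norm, Complex.normSq_apply, Complex.add_re,
      Complex.add_im, Complex.sub_re, Complex.sub_im, Complex.one_re, Complex.one_im]
    ring
  have ht : ‖a₃‖^2 ≤ 1/16 := by nlinarith [norm_nonneg a₃]
  have hbound : ‖1 - 2*a₂^2 + 2*a₃*a₂^2 - a₃^2‖ ≤ u*v + (2*‖a₂‖^2)*u := by
    rw [hE]
    refine (norm_add_le _ _).trans ?_
    rw [norm_mul, norm_mul, norm_neg, norm_mul, norm_pow]
    simp only [Complex.norm_ofNat]
    exact le_rfl
  have ha2 : 2*‖a₂‖^2 ≤ 1/2 := by nlinarith [norm_nonneg a₂]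
  have hu0 : 0 ≤ u := norm_nonneg _
  have hv0 : 0 ≤ v := norm_nonneg _
  have hS : u^2 + v^2 ≤ 17/8 := by rw [huv]; linarith
  refine hbound.trans ?_
  have : (2*‖a₂‖^2)*u ≤ (1/2)*u := mul_le_mul_of_nonneg_right ha2 hu0
  nlinarith [sq_nonneg (u - v), sq_nonneg (u + v), sq_nonneg (u - 1), sq_nonneg (v - 1),
    sq_nonneg (u - v - 1/2), sq_nonneg (u*v - 1)]

theorem stmt_17 (f : ℂ → ℂ) (hf : AnalyticOnNhd ℂ f (ball 0 1))
    (hf0 : f 0 = 0) (hf1 : deriv f 0 = 1)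
    (hΩ : ∀ z ∈ ball (0 : ℂ) 1, ‖z * deriv f z - f z‖ < 1 / 2)
    (a₂ a₃ : ℂ)
    (ha₂ : a₂ = iteratedDeriv 2 f 0 / 2)
    (ha₃ : a₃ = iteratedDeriv 3 f 0 / 6) :
    ‖1 - 2 * a₂ ^ 2 + 2 * a₃ * a₂ ^ 2 - a₃ ^ 2‖ ≤ 13 / 8 := by
  have h0 : (0:ℂ) ∈ ball (0:ℂ) 1 := mem_ball_self one_pos
  set d1 := deriv f with hd1def
  set d2 := deriv d1 with hd2def
  set d3 := deriv d2 with hd3def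
  have hd1 : AnalyticOnNhd ℂ d1 (ball 0 1) := hf.deriv
  have hd2 : AnalyticOnNhd ℂ d2 (ball 0 1) := hd1.deriv
  have hd3 : AnalyticOnNhd ℂ d3 (ball 0 1) := hd2.deriv
  set g : ℂ → ℂ := fun z => z * deriv f z - f z with hgdef
  have hg_an : AnalyticOnNhd ℂ g (ball 0 1) := (analyticOnNhd_id.mul hd1).sub hf
  have hderiv_g : ∀ z ∈ ball (0:ℂ) 1, deriv g z = z * d2 z := by
    intro z hz
    have h1 : HasDerivAt f (d1 z) z := (hf z hz).differentiableAt.hasDerivAt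
    have h2 : HasDerivAt d1 (d2 z) z := (hd1 z hz).differentiableAt.hasDerivAt
    have hgd : HasDerivAt g (1 * d1 z + z * d2 z - d1 z) z := ((hasDerivAt_id z).mul h2).sub h1
    rw [hgd.deriv]; ring
  have hderiv2_g : ∀ z ∈ ball (0:ℂ) 1, deriv (deriv g) z = d2 z + z * d3 z := by
    intro z hz
    have hevz : deriv g =ᶠ[𝓝 z] fun w => w * d2 w := by
      filter_upwards [isOpen_ball.mem_nhds hz] with w hw using hderiv_g w hw
    rw [hevz.deriv_eq]
    have h3 : HasDerivAt d2 (d3 z) z := (hd2 z hz).differentiableAt.hasDerivAt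
    have := (hasDerivAt_id z).mul h3
    simp only [id_eq] at this
    rw [show (fun w => w * d2 w) = id * d2 from rfl, this.deriv]; ring
  have h2g : iteratedDeriv 2 g 0 = d2 0 := by
    rw [iteratedDeriv_succ, iteratedDeriv_one]
    rw [hderiv2_g 0 h0]; ring
  have h3g : iteratedDeriv 3 g 0 = 2 * d3 0 := by
    rw [iteratedDeriv_succ, iteratedDeriv_succ, iteratedDeriv_one]
    have hev2 : deriv (deriv g) =ᶠ[𝓝 0] fun z => d2 z + z * d3 z := by
      filter_upwards [isOpen_ball.mem_nhds h0] with w hw using hderiv2_g w hw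
    rw [hev2.deriv_eq]
    have ha : HasDerivAt d2 (d3 0) 0 := (hd2 0 h0).differentiableAt.hasDerivAt
    have hb : HasDerivAt d3 (deriv d3 0) 0 := (hd3 0 h0).differentiableAt.hasDerivAt
    have := ha.add ((hasDerivAt_id 0).mul hb)
    simp only [id_eq] at this
    rw [show (fun z => d2 z + z * d3 z) = d2 + id * d3 from rfl, this.deriv]; ring
  have hb : ∀ z ∈ ball (0:ℂ) 1, ‖g z‖ ≤ 1/2 := fun z hz => (hΩ z hz).le
  have b2 := coeff_bound hg_an.differentiableOn hb 2
  have b3 := coeff_bound hg_an.differentiableOn hb 3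
  rw [h2g] at b2
  rw [h3g] at b3
  norm_num [Nat.factorial] at b2 b3
  have hf2 : iteratedDeriv 2 f 0 = d2 0 := by rw [iteratedDeriv_succ, iteratedDeriv_one]
  have hf3 : iteratedDeriv 3 f 0 = d3 0 := by
    rw [iteratedDeriv_succ, iteratedDeriv_succ, iteratedDeriv_one]
  have ha2n : ‖a₂‖ ≤ 1/2 := by
    rw [ha₂, hf2, norm_div]
    simp only [Complex.norm_ofNat]
    linarith
  have ha3n : ‖a₃‖ ≤ 1/4 := by
    rw [ha₃, hf3, norm_div]
    simp only [Complex.norm_ofNat]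
    linarith
  exact final_ineq a₂ a₃ ha2n ha3n
end

section
/- Let f(z) = z + a₂z² + a₃z³ + a₄z⁴ + ⋯ belong to Ω. Then |T₃(2)| = |(a₂ - a₄)(a₂² - 2a₃² + a₂a₄)| ≤ 329/549. -/
open Metric

theorem stmt_18 (f : ℂ → ℂ) (hf : AnalyticOnNhd ℂ f (ball 0 1))
    (hf0 : f 0 = 0) (hf1 : deriv f 0 = 1)
    (hΩ : ∀ z ∈ ball (0 : ℂ) 1, ‖z * deriv f z - f z‖ < 1 / 2)
    (a₂ a₃ a₄ : ℂ)
    (ha₂ : a₂ = iteratedDeriv 2 f 0 / 2)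
    (ha₃ : a₃ = iteratedDeriv 3 f 0 / 6)
    (ha₄ : a₄ = iteratedDeriv 4 f 0 / 24) :
    ‖(a₂ - a₄) * (a₂ ^ 2 - 2 * a₃ ^ 2 + a₂ * a₄)‖ ≤ 329 / 549 := by
  set B : Set ℂ := ball 0 1 with hB
  set g : ℂ → ℂ := fun z => z * deriv f z - f z with hgdef
  -- iterated derivatives of f are analytic on B
  have hFa : ∀ k, AnalyticOnNhd ℂ (iteratedDeriv k f) B := by
    intro k
    induction k with
    | zero => simpa [iteratedDeriv_zero] using hf
    | succ k ih => rw [iteratedDeriv_succ]; exact ih.deriv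
  have hD : ∀ (k : ℕ), ∀ z ∈ B, HasDerivAt (iteratedDeriv k f) (iteratedDeriv (k+1) f z) z := by
    intro k z hz
    rw [iteratedDeriv_succ]
    exact ((hFa k) z hz).differentiableAt.hasDerivAt
  have hga : AnalyticOnNhd ℂ g B := by
    have h1 : AnalyticOnNhd ℂ (deriv f) B := hf.deriv
    exact (analyticOnNhd_id.mul h1).sub hf
  -- key identity
  have hkey : ∀ (k : ℕ), ∀ z ∈ B, iteratedDeriv (k+1) g z =
      (k : ℂ) * iteratedDeriv (k+1) f z + z * iteratedDeriv (k+2) f z := by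
    intro k
    induction k with
    | zero =>
      intro z hz
      have h1 : HasDerivAt (deriv f) (iteratedDeriv 2 f z) z := by
        have := hD 1 z hz
        rwa [iteratedDeriv_one] at this
      have h0 : HasDerivAt f (deriv f z) z := (hf z hz).differentiableAt.hasDerivAt
      have hgd : HasDerivAt g (1 * deriv f z + z * iteratedDeriv 2 f z - deriv f z) z :=
        ((hasDerivAt_id z).mul h1).sub h0
      rw [iteratedDeriv_one, hgd.deriv]
      push_cast
      ring
    | succ k ih =>
      intro z hz
      have heq : iteratedDeriv (k+1) g =ᶠ[nhds z]
          fun w => (k : ℂ) * iteratedDeriv (k+1) f w + w * iteratedDeriv (k+2) f w := by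
        filter_upwards [isOpen_ball.mem_nhds hz] with w hw using ih w hw
      have hder : HasDerivAt (fun w => (k : ℂ) * iteratedDeriv (k+1) f w + w * iteratedDeriv (k+2) f w)
          ((k : ℂ) * iteratedDeriv (k+2) f z + (1 * iteratedDeriv (k+2) f z + z * iteratedDeriv (k+3) f z)) z :=
        ((hD (k+1) z hz).const_mul _).add ((hasDerivAt_id z).mul (hD (k+2) z hz))
      rw [iteratedDeriv_succ, heq.deriv_eq, hder.deriv]
      push_cast
      ring
  have h0B : (0 : ℂ) ∈ B := mem_ball_self one_pos
  have e2 : iteratedDeriv 2 g 0 = iteratedDeriv 2 f 0 := by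
    have := hkey 1 0 h0B; norm_num at this; exact this
  have e3 : iteratedDeriv 3 g 0 = 2 * iteratedDeriv 3 f 0 := by
    have := hkey 2 0 h0B; norm_num at this; exact this
  have e4 : iteratedDeriv 4 g 0 = 3 * iteratedDeriv 4 f 0 := by
    have := hkey 3 0 h0B; norm_num at this; exact this
  -- Cauchy estimates
  set R : NNReal := (19/20 : NNReal) with hR
  have hRpos : (0:ℝ) < (R:ℝ) := by norm_num [hR]
  have hsub : closedBall (0:ℂ) R ⊆ B := by
    apply closedBall_subset_ball
    norm_num [hR]
  have hgdiff : DifferentiableOn ℂ g (closedBall (0:ℂ) R) :=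
    (hga.differentiableOn).mono hsub
  have hps : HasFPowerSeriesOnBall g (cauchyPowerSeries g 0 R) 0 R :=
    hgdiff.hasFPowerSeriesOnBall (by norm_num [hR])
  -- integral bound
  have hbound : ∀ n : ℕ, ‖iteratedDeriv n g 0‖ ≤ (n.factorial : ℝ) * ((1/2) * (20/19)^n) := by
    intro n
    have hfs := hps.factorial_smul (1 : ℂ) n
    have h1 : iteratedDeriv n g 0 = iteratedFDeriv ℂ n g 0 (fun _ => 1) :=
      iteratedDeriv_eq_iteratedFDeriv
    have h2 : ‖cauchyPowerSeries g 0 R n (fun _ => (1:ℂ))‖ ≤ ‖cauchyPowerSeries g 0 R n‖ := by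
      have := (cauchyPowerSeries g 0 R n).le_opNorm (fun _ => (1:ℂ))
      simpa using this
    have h3 : ‖cauchyPowerSeries g 0 R n‖ ≤
        ((2 * Real.pi)⁻¹ * ∫ θ : ℝ in (0)..2 * Real.pi, ‖g (circleMap 0 R θ)‖) * |(R:ℝ)|⁻¹ ^ n :=
      norm_cauchyPowerSeries_le g 0 R n
    have hcont : Continuous fun θ : ℝ => ‖g (circleMap 0 (R:ℝ) θ)‖ := by
      apply Continuous.norm
      apply hga.continuousOn.comp_continuous (continuous_circleMap 0 (R:ℝ))
      intro θ
      apply hsub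
      exact circleMap_mem_closedBall 0 hRpos.le θ
    have hint : (∫ θ : ℝ in (0)..2 * Real.pi, ‖g (circleMap 0 (R:ℝ) θ)‖) ≤
        ∫ _ : ℝ in (0)..2 * Real.pi, (1/2 : ℝ) := by
      apply intervalIntegral.integral_mono_on Real.two_pi_pos.le
        (hcont.intervalIntegrable _ _) intervalIntegrable_const
      intro θ _
      exact (hΩ _ (hsub (circleMap_mem_closedBall 0 hRpos.le θ))).le
    have hintval : (∫ _ : ℝ in (0)..2 * Real.pi, (1/2 : ℝ)) = Real.pi := by
      simp [intervalIntegral.integral_const]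
      ring
    have hC : (2 * Real.pi)⁻¹ * ∫ θ : ℝ in (0)..2 * Real.pi, ‖g (circleMap 0 (R:ℝ) θ)‖ ≤ 1/2 := by
      rw [inv_mul_le_iff₀ (by positivity)]
      calc (∫ θ : ℝ in (0)..2 * Real.pi, ‖g (circleMap 0 (R:ℝ) θ)‖) ≤ Real.pi := hint.trans_eq hintval
        _ = 1/2 * (2 * Real.pi) := by ring
        _ ≤ 2 * Real.pi * (1/2) := by linarith [Real.pi_pos]
    have hRinv : |(R:ℝ)|⁻¹ = 20/19 := by
      rw [abs_of_pos hRpos]; norm_num [hR]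
    have hnorm : ‖cauchyPowerSeries g 0 R n‖ ≤ (1/2) * (20/19)^n := by
      calc ‖cauchyPowerSeries g 0 R n‖ ≤ _ := h3
        _ ≤ (1/2) * (20/19)^n := by
            rw [hRinv]
            apply mul_le_mul_of_nonneg_right hC (by positivity)
    calc ‖iteratedDeriv n g 0‖ = ‖(n.factorial : ℕ) • cauchyPowerSeries g 0 R n (fun _ => (1:ℂ))‖ := by
          rw [hfs, h1]
      _ = (n.factorial : ℝ) * ‖cauchyPowerSeries g 0 R n (fun _ => (1:ℂ))‖ := by
          rw [← Nat.cast_smul_eq_nsmul ℝ, norm_smul]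
          simp
      _ ≤ (n.factorial : ℝ) * ((1/2) * (20/19)^n) := by
          apply mul_le_mul_of_nonneg_left (h2.trans hnorm) (by positivity)
  -- coefficient bounds
  have hA : ‖a₂‖ ≤ 5/9 := by
    rw [ha₂, ← e2]
    have := hbound 2
    rw [norm_div]
    simp only [Nat.factorial] at this
    norm_num at this ⊢
    linarith
  have hBb : ‖a₃‖ ≤ 3/10 := by
    rw [ha₃]
    have h : iteratedDeriv 3 f 0 = iteratedDeriv 3 g 0 / 2 := by
      rw [e3]; ring
    rw [h]
    have := hbound 3
    simp only [Nat.factorial] at this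
    rw [norm_div, norm_div]
    norm_num at this ⊢
    linarith
  have hC4 : ‖a₄‖ ≤ 21/100 := by
    rw [ha₄]
    have h : iteratedDeriv 4 f 0 = iteratedDeriv 4 g 0 / 3 := by
      rw [e4]; ring
    rw [h]
    have := hbound 4
    simp only [Nat.factorial] at this
    rw [norm_div, norm_div]
    norm_num at this ⊢
    linarith
  -- final computation
  have step1 : ‖(a₂ - a₄) * (a₂ ^ 2 - 2 * a₃ ^ 2 + a₂ * a₄)‖ ≤
      (‖a₂‖ + ‖a₄‖) * (‖a₂‖^2 + 2*‖a₃‖^2 + ‖a₂‖*‖a₄‖) := by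
    rw [norm_mul]
    apply mul_le_mul (norm_sub_le _ _) ?_ (norm_nonneg _) (by positivity)
    calc ‖a₂ ^ 2 - 2 * a₃ ^ 2 + a₂ * a₄‖ ≤ ‖a₂ ^ 2 - 2 * a₃ ^ 2‖ + ‖a₂ * a₄‖ := norm_add_le _ _
      _ ≤ ‖a₂ ^ 2‖ + ‖2 * a₃ ^ 2‖ + ‖a₂ * a₄‖ := by
          gcongr
          exact norm_sub_le _ _
      _ = ‖a₂‖^2 + 2*‖a₃‖^2 + ‖a₂‖*‖a₄‖ := by
          rw [norm_mul, norm_mul, norm_pow, norm_pow]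
          norm_num
  refine step1.trans ?_
  have h2 := norm_nonneg a₂
  have h3 := norm_nonneg a₃
  have h4 := norm_nonneg a₄
  nlinarith [sq_nonneg (‖a₂‖ + ‖a₄‖), sq_nonneg ‖a₃‖, mul_nonneg h2 h4]
end
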